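/- arXiv:1509.07206 — 6 statements merged into one kernel-verified Lean document; each statement's English description precedes it below -/
import Mathlib

section
/- Alternating-color technique, direction 1: let φ be a cPLTL formula with no parameterized always operators (a cPLTL_F formula), let w be a cost-trace with (w,α) ⊨ φ for some valuation α, and let k = max over the variables x of φ of α(x). Then for every (k+1)-spaced coloring w′ of w, we have w′ ⊨ rel(φ), where rel(φ) is the LTL formula obtained by recursively replacing each subformula F_{≤x}ψ of φ by (p → p U (¬p U rel(ψ))) ∧ (¬p → ¬p U (p U rel(ψ))). -/
inductive cPLTL (P V : Type) : Type
  | pos (p : P)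
  | neg (p : P)
  | and (φ ψ : cPLTL P V)
  | or (φ ψ : cPLTL P V)
  | next (φ : cPLTL P V)
  | until_ (φ ψ : cPLTL P V)
  | release (φ ψ : cPLTL P V)
  | fle (z : V) (φ : cPLTL P V)
  | gle (z : V) (φ : cPLTL P V)

def cost (c : ℕ → ℕ) (n j : ℕ) : ℕ := ∑ k ∈ Finset.range j, c (n + k)

def Sat {P V : Type} (w : ℕ → Set P) (c : ℕ → ℕ) (α : V → ℕ) : cPLTL P V → ℕ → Prop
  | .pos p, n => p ∈ w n
  | .neg p, n => p ∉ w n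
  | .and φ ψ, n => Sat w c α φ n ∧ Sat w c α ψ n
  | .or φ ψ, n => Sat w c α φ n ∨ Sat w c α ψ n
  | .next φ, n => Sat w c α φ (n + 1)
  | .until_ φ ψ, n => ∃ j, Sat w c α ψ (n + j) ∧ ∀ k < j, Sat w c α φ (n + k)
  | .release φ ψ, n => ∀ j, Sat w c α ψ (n + j) ∨ ∃ k < j, Sat w c α φ (n + k)
  | .fle z φ, n => ∃ j, cost c n j ≤ α z ∧ Sat w c α φ (n + j)
  | .gle z φ, n => ∀ j, cost c n j ≤ α z → Sat w c α φ (n + j)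

/-- φ contains no parameterized always operator (cPLTL_F formulas). -/
def cPLTL.NoG {P V : Type} : cPLTL P V → Prop
  | .pos _ => True
  | .neg _ => True
  | .and φ ψ => φ.NoG ∧ ψ.NoG
  | .or φ ψ => φ.NoG ∧ ψ.NoG
  | .next φ => φ.NoG
  | .until_ φ ψ => φ.NoG ∧ ψ.NoG
  | .release φ ψ => φ.NoG ∧ ψ.NoG
  | .fle _ φ => φ.NoG
  | .gle _ _ => False

/-- Atomic propositions occurring in a formula. -/
def cPLTL.atoms {P V : Type} : cPLTL P V → Set P
  | .pos p => {p}
  | .neg p => {p}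
  | .and φ ψ => φ.atoms ∪ ψ.atoms
  | .or φ ψ => φ.atoms ∪ ψ.atoms
  | .next φ => φ.atoms
  | .until_ φ ψ => φ.atoms ∪ ψ.atoms
  | .release φ ψ => φ.atoms ∪ ψ.atoms
  | .fle _ φ => φ.atoms
  | .gle _ φ => φ.atoms

/-- The relativization rel(φ) w.r.t. the fresh proposition p: replace every
subformula F_{≤x}ψ by (p → p U (¬p U rel ψ)) ∧ (¬p → ¬p U (p U rel ψ)). -/
def rel {P V : Type} (p : P) : cPLTL P V → cPLTL P V
  | .pos q => .pos q
  | .neg q => .neg q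
  | .and φ ψ => .and (rel p φ) (rel p ψ)
  | .or φ ψ => .or (rel p φ) (rel p ψ)
  | .next φ => .next (rel p φ)
  | .until_ φ ψ => .until_ (rel p φ) (rel p ψ)
  | .release φ ψ => .release (rel p φ) (rel p ψ)
  | .fle _ ψ => .and
      (.or (.neg p) (.until_ (.pos p) (.until_ (.neg p) (rel p ψ))))
      (.or (.pos p) (.until_ (.neg p) (.until_ (.pos p) (rel p ψ))))
  | .gle z ψ => .gle z (rel p ψ)

/-- w' is a coloring of w with the fresh proposition p: same costs
(built in, as both share the cost sequence c) and same truth values on P \ {p}. -/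
def Coloring {P : Type} (p : P) (w w' : ℕ → Set P) : Prop :=
  ∀ n, w' n \ {p} = w n \ {p}

/-- n is a changepoint of the coloring w' (w.r.t. p). -/
def Changepoint {P : Type} (p : P) (w' : ℕ → Set P) (n : ℕ) : Prop :=
  n = 0 ∨ ¬ ((p ∈ w' (n - 1)) ↔ (p ∈ w' n))

/-- m and m' are successive changepoints of w'. -/
def SuccessiveCP {P : Type} (p : P) (w' : ℕ → Set P) (m m' : ℕ) : Prop :=
  m < m' ∧ Changepoint p w' m ∧ Changepoint p w' m' ∧
    ∀ i, m < i → i < m' → ¬ Changepoint p w' i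

/-- The coloring w' (with costs c) is k-spaced: every block, i.e. every infix
w'_m c_m ⋯ w'_{m'-1} between successive changepoints m and m', has cost at least k. -/
def Spaced {P : Type} (p : P) (w' : ℕ → Set P) (c : ℕ → ℕ) (k : ℕ) : Prop :=
  ∀ m m', SuccessiveCP p w' m m' → k ≤ cost c m (m' - 1 - m)

/-- The coloring w' (with costs c) is k-bounded: every block has cost at most k,
and if there is a last changepoint, the tail starting there has cost at most k. -/
def Bounded {P : Type} (p : P) (w' : ℕ → Set P) (c : ℕ → ℕ) (k : ℕ) : Prop :=
  (∀ m m', SuccessiveCP p w' m m' → cost c m (m' - 1 - m) ≤ k) ∧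
  (∀ m, Changepoint p w' m → (∀ i, m < i → ¬ Changepoint p w' i) →
    ∀ j, cost c m j ≤ k)

/-- Variables parameterizing eventually operators, as a finset. -/
def cPLTL.varFs {P V : Type} [DecidableEq V] : cPLTL P V → Finset V
  | .pos _ => ∅
  | .neg _ => ∅
  | .and φ ψ => φ.varFs ∪ ψ.varFs
  | .or φ ψ => φ.varFs ∪ ψ.varFs
  | .next φ => φ.varFs
  | .until_ φ ψ => φ.varFs ∪ ψ.varFs
  | .release φ ψ => φ.varFs ∪ ψ.varFs
  | .fle z φ => insert z φ.varFs
  | .gle _ φ => φ.varFs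

lemma cost_eq_Ico (c : ℕ → ℕ) (n j : ℕ) :
    cost c n j = ∑ t ∈ Finset.Ico n (n + j), c t := by
  rw [Finset.sum_Ico_eq_sum_range]
  simp [cost]

lemma cost_mono (c : ℕ → ℕ) {n j m j' : ℕ} (h1 : n ≤ m) (h2 : m + j' ≤ n + j) :
    cost c m j' ≤ cost c n j := by
  rw [cost_eq_Ico, cost_eq_Ico]
  apply Finset.sum_le_sum_of_subset
  intro t ht
  simp only [Finset.mem_Ico] at *
  omega

lemma nat_least {Q : ℕ → Prop} (h : ∃ i, Q i) : ∃ i, Q i ∧ ∀ j, j < i → ¬ Q j := by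
  classical
  exact ⟨Nat.find h, Nat.find_spec h, fun j hj => Nat.find_min h hj⟩

lemma const_color {P : Type} (p : P) (w' : ℕ → Set P) (n m : ℕ)
    (h : ∀ i, n < i → i ≤ m → ¬ Changepoint p w' i) :
    ∀ i, n ≤ i → i ≤ m → (p ∈ w' i ↔ p ∈ w' n) := by
  intro i
  induction i with
  | zero =>
    intro h1 _
    have : n = 0 := Nat.le_zero.mp h1
    rw [this]
  | succ i ih =>
    intro h1 h2
    rcases Nat.lt_or_ge n (i + 1) with hlt | hge
    · have hnc := h (i + 1) hlt h2
      simp only [Changepoint, not_or, not_not, Nat.add_sub_cancel] at hnc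
      exact hnc.2.symm.trans (ih (Nat.lt_succ_iff.mp hlt) (le_trans (Nat.le_succ i) h2))
    · have : n = i + 1 := le_antisymm h1 hge
      rw [this]

lemma key_lemma {P V : Type} (p : P) (w' : ℕ → Set P) (c : ℕ → ℕ) (β : V → ℕ) (k : ℕ)
    (hspaced : Spaced p w' c (k + 1)) (χ : cPLTL P V) (n j : ℕ)
    (hcost : cost c n j ≤ k) (hχ : Sat w' c β χ (n + j)) :
    Sat w' c β (.and (.or (.neg p) (.until_ (.pos p) (.until_ (.neg p) χ)))
      (.or (.pos p) (.until_ (.neg p) (.until_ (.pos p) χ)))) n := by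
  have honecp : ∀ i i', n < i → Changepoint p w' i → i < i' → i' ≤ n + j →
      ¬ Changepoint p w' i' := by
    intro i i' hi hci hii' hi' hci'
    obtain ⟨i₂, ⟨hi₂gt, hci₂⟩, hleast⟩ :=
      nat_least (⟨i', hii', hci'⟩ : ∃ t, i < t ∧ Changepoint p w' t)
    have hsc : SuccessiveCP p w' i i₂ :=
      ⟨hi₂gt, hci, hci₂, fun t ht1 ht2 hct => hleast t ht2 ⟨ht1, hct⟩⟩
    have hsp := hspaced i i₂ hsc
    have hi₂le : i₂ ≤ i' := by
      by_contra hc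
      exact hleast i' (lt_of_not_ge hc) ⟨hii', hci'⟩
    have hmono := cost_mono c (le_of_lt hi) (show i + (i₂ - 1 - i) ≤ n + j by omega)
    omega
  simp only [Sat]
  by_cases hcp : ∃ i, n < i ∧ i ≤ n + j ∧ Changepoint p w' i
  · obtain ⟨i₀, ⟨hi₀n, hi₀le, hci₀⟩, hleast⟩ := nat_least hcp
    have hc1 : ∀ t, n ≤ t → t ≤ i₀ - 1 → (p ∈ w' t ↔ p ∈ w' n) :=
      const_color p w' n (i₀ - 1)
        (fun i h1 h2 hc => hleast i (by omega) ⟨h1, by omega, hc⟩)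
    have hc2 : ∀ t, i₀ ≤ t → t ≤ n + j → (p ∈ w' t ↔ p ∈ w' i₀) :=
      const_color p w' i₀ (n + j)
        (fun i h1 h2 hc => honecp i₀ i hi₀n hci₀ h1 h2 hc)
    have hflip : ¬ (p ∈ w' n ↔ p ∈ w' i₀) := by
      rcases hci₀ with h | h
      · omega
      · have hiff := hc1 (i₀ - 1) (by omega) (le_refl _)
        tauto
    constructor
    · by_cases hp : p ∈ w' n
      · refine Or.inr ⟨i₀ - n, ⟨n + j - i₀, ?_, ?_⟩, ?_⟩
        · have e : n + (i₀ - n) + (n + j - i₀) = n + j := by omega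
          rw [e]; exact hχ
        · intro t ht hmem
          have hiff := hc2 (n + (i₀ - n) + t) (by omega) (by omega)
          exact hflip ⟨fun _ => hiff.mp hmem, fun _ => hp⟩
        · intro t ht
          exact (hc1 (n + t) (by omega) (by omega)).mpr hp
      · exact Or.inl hp
    · by_cases hp : p ∈ w' n
      · exact Or.inl hp
      · refine Or.inr ⟨i₀ - n, ⟨n + j - i₀, ?_, ?_⟩, ?_⟩
        · have e : n + (i₀ - n) + (n + j - i₀) = n + j := by omega
          rw [e]; exact hχ
        · intro t ht
          have hiff := hc2 (n + (i₀ - n) + t) (by omega) (by omega)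
          have hpi₀ : p ∈ w' i₀ := by
            by_contra hc
            exact hflip ⟨fun h => absurd h hp, fun h => absurd h hc⟩
          exact hiff.mpr hpi₀
        · intro t ht hmem
          exact hp ((hc1 (n + t) (by omega) (by omega)).mp hmem)
  · have hconst : ∀ t, n ≤ t → t ≤ n + j → (p ∈ w' t ↔ p ∈ w' n) :=
      const_color p w' n (n + j) (fun i h1 h2 hc => hcp ⟨i, h1, h2, hc⟩)
    constructor
    · by_cases hp : p ∈ w' n
      · refine Or.inr ⟨j, ⟨0, ?_, ?_⟩, ?_⟩
        · simpa using hχ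
        · intro t ht; omega
        · intro t ht
          exact (hconst (n + t) (by omega) (by omega)).mpr hp
      · exact Or.inl hp
    · by_cases hp : p ∈ w' n
      · exact Or.inl hp
      · refine Or.inr ⟨j, ⟨0, ?_, ?_⟩, ?_⟩
        · simpa using hχ
        · intro t ht; omega
        · intro t ht hmem
          exact hp ((hconst (n + t) (by omega) (by omega)).mp hmem)

lemma rel_sat {P V : Type} [DecidableEq V] (p : P) (w w' : ℕ → Set P) (c : ℕ → ℕ)
    (α β : V → ℕ) (k : ℕ) (hcol : Coloring p w w') (hspaced : Spaced p w' c (k + 1)) :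
    ∀ φ : cPLTL P V, φ.NoG → p ∉ φ.atoms → (∀ z ∈ φ.varFs, α z ≤ k) →
      ∀ n, Sat w c α φ n → Sat w' c β (rel p φ) n := by
  intro φ
  induction φ with
  | pos q =>
    intro _ hfresh _ n hsat
    simp only [cPLTL.atoms, Set.mem_singleton_iff] at hfresh
    simp only [rel, Sat] at hsat ⊢
    have h1 : q ∈ w n \ {p} := ⟨hsat, by simp; exact fun h => hfresh h.symm⟩
    rw [← hcol n] at h1
    exact h1.1
  | neg q =>
    intro _ hfresh _ n hsat
    simp only [cPLTL.atoms, Set.mem_singleton_iff] at hfresh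
    simp only [rel, Sat] at hsat ⊢
    intro hmem
    have h1 : q ∈ w' n \ {p} := ⟨hmem, by simp; exact fun h => hfresh h.symm⟩
    rw [hcol n] at h1
    exact hsat h1.1
  | and φ ψ ihφ ihψ =>
    intro hNoG hfresh hvar n hsat
    simp only [cPLTL.atoms, Set.mem_union, not_or] at hfresh
    simp only [cPLTL.varFs, Finset.mem_union] at hvar
    simp only [rel, Sat] at hsat ⊢
    exact ⟨ihφ hNoG.1 hfresh.1 (fun z hz => hvar z (Or.inl hz)) n hsat.1,
           ihψ hNoG.2 hfresh.2 (fun z hz => hvar z (Or.inr hz)) n hsat.2⟩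
  | or φ ψ ihφ ihψ =>
    intro hNoG hfresh hvar n hsat
    simp only [cPLTL.atoms, Set.mem_union, not_or] at hfresh
    simp only [cPLTL.varFs, Finset.mem_union] at hvar
    simp only [rel, Sat] at hsat ⊢
    exact hsat.imp (ihφ hNoG.1 hfresh.1 (fun z hz => hvar z (Or.inl hz)) n)
                   (ihψ hNoG.2 hfresh.2 (fun z hz => hvar z (Or.inr hz)) n)
  | next φ ihφ =>
    intro hNoG hfresh hvar n hsat
    simp only [rel, Sat] at hsat ⊢
    exact ihφ hNoG hfresh hvar (n + 1) hsat
  | until_ φ ψ ihφ ihψ =>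
    intro hNoG hfresh hvar n hsat
    simp only [cPLTL.atoms, Set.mem_union, not_or] at hfresh
    simp only [cPLTL.varFs, Finset.mem_union] at hvar
    simp only [rel, Sat] at hsat ⊢
    obtain ⟨j, hj, hk'⟩ := hsat
    exact ⟨j, ihψ hNoG.2 hfresh.2 (fun z hz => hvar z (Or.inr hz)) (n + j) hj,
      fun t ht => ihφ hNoG.1 hfresh.1 (fun z hz => hvar z (Or.inl hz)) (n + t) (hk' t ht)⟩
  | release φ ψ ihφ ihψ =>
    intro hNoG hfresh hvar n hsat
    simp only [cPLTL.atoms, Set.mem_union, not_or] at hfresh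
    simp only [cPLTL.varFs, Finset.mem_union] at hvar
    simp only [rel, Sat] at hsat ⊢
    intro j
    rcases hsat j with h | ⟨t, ht, hφt⟩
    · exact Or.inl (ihψ hNoG.2 hfresh.2 (fun z hz => hvar z (Or.inr hz)) (n + j) h)
    · exact Or.inr ⟨t, ht, ihφ hNoG.1 hfresh.1 (fun z hz => hvar z (Or.inl hz)) (n + t) hφt⟩
  | fle z ψ ihψ =>
    intro hNoG hfresh hvar n hsat
    simp only [cPLTL.varFs] at hvar
    simp only [Sat] at hsat
    obtain ⟨j, hj, hsψ⟩ := hsat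
    have hαz : α z ≤ k := hvar z (Finset.mem_insert_self z _)
    have hχ := ihψ hNoG hfresh (fun x hx => hvar x (Finset.mem_insert_of_mem hx)) (n + j) hsψ
    simp only [rel]
    exact key_lemma p w' c β k hspaced (rel p ψ) n j (le_trans hj hαz) hχ
  | gle z ψ ihψ =>
    intro hNoG
    exact absurd hNoG (by simp [cPLTL.NoG])

/-- Alternating-color technique, direction 1. -/
theorem altcolor_dir1 {P V : Type} [DecidableEq V] (p : P) (φ : cPLTL P V)
    (hNoG : φ.NoG) (hfresh : p ∉ φ.atoms)
    (w : ℕ → Set P) (hw : ∀ n, p ∉ w n) (c : ℕ → ℕ) (α : V → ℕ)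
    (hsat : Sat w c α φ 0)
    (k : ℕ) (hk : k = φ.varFs.sup α)
    (w' : ℕ → Set P) (hcol : Coloring p w w') (hspaced : Spaced p w' c (k + 1)) :
    ∀ β : V → ℕ, Sat w' c β (rel p φ) 0 := by
  intro β
  exact rel_sat p w w' c α β k hcol hspaced φ hNoG hfresh
    (fun z hz => hk ▸ Finset.le_sup hz) 0 hsat
end

section
/- For every cost-trace w satisfying the κ-condition, every position n, and every valuation α: (w,n,α) ⊨ G_{>x}φ if and only if for all j ≥ 0 with Σ_{k=n}^{n+j-1} cₖ > α(x) one has (w,n+j,α) ⊨ φ, where G_{>x}φ is defined as F_{≤x} G X (¬κ ∨ G φ). -/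
/-- ff := κ ∧ ¬κ, Gψ := ff R ψ. -/
def Gm {P V : Type} (κ : P) (ψ : cPLTL P V) : cPLTL P V :=
  .release (.and (.pos κ) (.neg κ)) ψ

/-- G_{>x}φ := F_{≤x} G X (¬κ ∨ G φ). -/
def GGt {P V : Type} (κ : P) (x : V) (φ : cPLTL P V) : cPLTL P V :=
  .fle x (Gm κ (.next (.or (.neg κ) (Gm κ φ))))


lemma cost_mono_s7 {c : ℕ → ℕ} {n : ℕ} : Monotone (cost c n) := fun _ _ h =>
  Finset.sum_le_sum_of_subset (Finset.range_subset_range.2 h)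

lemma cost_succ (c : ℕ → ℕ) (n j : ℕ) : cost c n (j + 1) = cost c n j + c (n + j) :=
  Finset.sum_range_succ _ _

lemma cost_eq_of_zero (c : ℕ → ℕ) (n j0 : ℕ) :
    ∀ d, (∀ k, j0 ≤ k → k < j0 + d → c (n + k) = 0) →
      cost c n (j0 + d) = cost c n j0 := by
  intro d
  induction d with
  | zero => intro _; rfl
  | succ d ih =>
      intro hz
      rw [← Nat.add_assoc, cost_succ,
        ih (fun k h1 h2 => hz k h1 (by omega)),
        hz (j0 + d) (Nat.le_add_right _ _) (by omega), Nat.add_zero]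

lemma exists_pos_between (c : ℕ → ℕ) (n j0 j : ℕ)
    (h : cost c n j0 < cost c n j) :
    ∃ k, j0 ≤ k ∧ k < j ∧ 0 < c (n + k) := by
  by_contra hc
  push_neg at hc
  have hz : ∀ k, j0 ≤ k → k < j → c (n + k) = 0 := by
    intro k h1 h2; exact Nat.le_antisymm (hc k h1 h2) (Nat.zero_le _)
  have hle : j0 ≤ j := by
    by_contra hlt
    push_neg at hlt
    exact absurd (cost_mono_s7 (le_of_lt hlt)) (not_le.2 h)
  obtain ⟨d, rfl⟩ := Nat.exists_eq_add_of_le hle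
  have := cost_eq_of_zero c n j0 d hz
  omega

lemma sat_Gm {P V : Type} (κ : P) (w : ℕ → Set P) (c : ℕ → ℕ) (α : V → ℕ)
    (ψ : cPLTL P V) (m : ℕ) :
    Sat w c α (Gm κ ψ) m ↔ ∀ i, Sat w c α ψ (m + i) := by
  constructor
  · intro h i
    rcases h i with h' | ⟨k, _, hk⟩
    · exact h'
    · exact absurd hk.1 hk.2
  · intro h i
    exact Or.inl (h i)

theorem G_gt_correct {P V : Type} (κ : P) (w : ℕ → Set P) (c : ℕ → ℕ)
    (hκ : ∀ n, 0 < c n ↔ κ ∈ w (n + 1))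
    (n : ℕ) (α : V → ℕ) (x : V) (φ : cPLTL P V) :
    Sat w c α (GGt κ x φ) n ↔
      ∀ j, α x < cost c n j → Sat w c α φ (n + j) := by
  constructor
  · rintro ⟨j0, hj0, hG⟩ j hj
    rw [sat_Gm] at hG
    have hlt : cost c n j0 < cost c n j := lt_of_le_of_lt hj0 hj
    obtain ⟨k, hk1, hk2, hk3⟩ := exists_pos_between c n j0 j hlt
    have hκk : κ ∈ w (n + k + 1) := (hκ (n + k)).1 hk3
    have hGk := hG (k - j0)
    have e : n + j0 + (k - j0) + 1 = n + k + 1 := by omega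
    rcases hGk with h1 | hGφ
    · rw [e] at h1; exact absurd hκk h1
    · rw [e, sat_Gm] at hGφ
      have e2 : n + k + 1 + (j - k - 1) = n + j := by omega
      have := hGφ (j - k - 1)
      rwa [e2] at this
  · intro h
    by_cases hb : ∃ j, α x < cost c n j
    · have hJ1 : 1 ≤ Nat.find hb := by
        rcases Nat.eq_zero_or_pos (Nat.find hb) with h0 | h0
        · have := Nat.find_spec hb
          rw [h0] at this
          simp [cost] at this
        · exact h0
      refine ⟨Nat.find hb - 1, ?_, ?_⟩
      · have := Nat.find_min hb (m := Nat.find hb - 1) (by omega)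
        omega
      · rw [sat_Gm]
        intro i
        refine Or.inr ?_
        rw [sat_Gm]
        intro l
        have e : n + (Nat.find hb - 1) + i + 1 + l = n + (Nat.find hb + i + l) := by omega
        rw [e]
        refine h _ (lt_of_lt_of_le (Nat.find_spec hb) (cost_mono_s7 ?_))
        omega
    · push_neg at hb
      have hBdd : BddAbove (Set.range (cost c n)) := ⟨α x, by rintro v ⟨j, rfl⟩; exact hb j⟩
      have hne : (Set.range (cost c n)).Nonempty := ⟨cost c n 0, ⟨0, rfl⟩⟩
      obtain ⟨j0, hj0⟩ := Nat.sSup_mem hne hBdd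
      refine ⟨j0, hb j0, ?_⟩
      rw [sat_Gm]
      intro i
      refine Or.inl ?_
      show κ ∉ w (n + j0 + i + 1)
      intro hw
      have hpos : 0 < c (n + (j0 + i)) := by
        rw [← Nat.add_assoc]; exact (hκ (n + j0 + i)).2 hw
      have h1 : cost c n (j0 + i + 1) ≤ cost c n j0 := hj0 ▸ le_csSup hBdd ⟨j0 + i + 1, rfl⟩
      have h2 : cost c n j0 ≤ cost c n (j0 + i) := cost_mono_s7 (Nat.le_add_right _ _)
      have h3 := cost_succ c n (j0 + i)
      omega
end

section
/- For every cost-trace w, position n, and valuation α: (w,n,α) ⊨ φ U_{≤x} ψ — i.e. there exists j ≥ 0 with Σ_{k=n}^{n+j-1} cₖ ≤ α(x), (w,n+j,α) ⊨ ψ, and (w,n+k,α) ⊨ φ for all 0 ≤ k < j — if and only if (w,n,α) ⊨ (φ U ψ) ∧ F_{≤x}ψ. (Note: this equivalence holds because costs are nonnegative, so the cheapest witness of ψ reachable within cost α(x) can be combined with the until-witness.) -/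
theorem until_le_correct {P V : Type} (w : ℕ → Set P) (c : ℕ → ℕ)
    (n : ℕ) (α : V → ℕ) (x : V) (φ ψ : cPLTL P V) :
    (∃ j, cost c n j ≤ α x ∧ Sat w c α ψ (n + j) ∧ ∀ k < j, Sat w c α φ (n + k)) ↔
      Sat w c α (.and (.until_ φ ψ) (.fle x ψ)) n := by
  constructor
  · rintro ⟨j, hc, hψ, hφ⟩
    exact ⟨⟨j, hψ, hφ⟩, ⟨j, hc, hψ⟩⟩
  · rintro ⟨⟨j₁, hψ₁, hφ₁⟩, ⟨j₂, hc₂, hψ₂⟩⟩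
    rcases le_or_gt j₁ j₂ with h | h
    · refine ⟨j₁, le_trans ?_ hc₂, hψ₁, hφ₁⟩
      exact Finset.sum_le_sum_of_subset (Finset.range_subset_range.2 h)
    · exact ⟨j₂, hc₂, hψ₂, fun k hk => hφ₁ k (hk.trans h)⟩
end

section
/- For every cost-trace w, position n, and valuation α: (w,n,α) ⊨ φ R_{≤y} ψ — i.e. for every j ≥ 0 with Σ_{k=n}^{n+j-1} cₖ ≤ α(y), either (w,n+j,α) ⊨ ψ or there exists 0 ≤ k < j with (w,n+k,α) ⊨ φ — if and only if (w,n,α) ⊨ (φ R ψ) ∨ G_{≤y}ψ. -/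
lemma cost_mono_s9 (c : ℕ → ℕ) (n : ℕ) {i j : ℕ} (h : i ≤ j) :
    cost c n i ≤ cost c n j :=
  Finset.sum_le_sum_of_subset (Finset.range_subset_range.mpr h)

theorem release_le_correct {P V : Type} (w : ℕ → Set P) (c : ℕ → ℕ)
    (n : ℕ) (α : V → ℕ) (y : V) (φ ψ : cPLTL P V) :
    (∀ j, cost c n j ≤ α y → (Sat w c α ψ (n + j) ∨ ∃ k < j, Sat w c α φ (n + k))) ↔
      Sat w c α (.or (.release φ ψ) (.gle y ψ)) n := by
  constructor
  · intro h
    by_cases hg : ∀ j, cost c n j ≤ α y → Sat w c α ψ (n + j)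
    · exact Or.inr hg
    · left
      push_neg at hg
      obtain ⟨j0, hj0, hψ⟩ := hg
      obtain ⟨k, hk, hφ⟩ := (h j0 hj0).resolve_left hψ
      intro j
      rcases lt_or_ge k j with hkj | hjk
      · exact Or.inr ⟨k, hkj, hφ⟩
      · exact h j (le_trans (cost_mono_s9 c n (hjk.trans hk.le)) hj0)
  · rintro (hr | hg) j hj
    · exact hr j
    · exact Or.inl (hg j hj)
end

section
/- Pumping lemma for colored Büchi graphs with costs: if a colored Büchi graph with costs with n vertices has an initial pumpable fair path, then it has one of the ultimately periodic form π₀π₁^ω with |π₀π₁| ∈ O(n²). -/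
/-- A colored Büchi graph with costs: finite directed graph, initial vertex,
p-labeling, cost function on edges, accepting set. -/
structure CBG (V : Type) where
  E : V → V → Prop
  vI : V
  lab : V → Prop       -- whether the vertex is labeled with p
  cst : V → V → ℕ
  F : Set V

namespace CBG

variable {V : Type} (G : CBG V)

/-- An initial infinite path. -/
def IsPath (π : ℕ → V) : Prop :=
  π 0 = G.vI ∧ ∀ n, G.E (π n) (π (n + 1))

/-- Fairness: π visits F infinitely often. -/
def Fair (π : ℕ → V) : Prop := {n | π n ∈ G.F}.Infinite

/-- n is a changepoint of π: position 0 or the p-label changes. -/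
def Changepoint (π : ℕ → V) (n : ℕ) : Prop :=
  n = 0 ∨ ¬ (G.lab (π (n - 1)) ↔ G.lab (π n))

/-- m and m' are successive changepoints of π; the block consists of
positions m, ..., m'-1. -/
def SuccessiveCP (π : ℕ → V) (m m' : ℕ) : Prop :=
  m < m' ∧ G.Changepoint π m ∧ G.Changepoint π m' ∧
    ∀ i, m < i → i < m' → ¬ G.Changepoint π i

/-- π is pumpable: each block contains a vertex repetition whose cycle has
non-zero cost. -/
def Pumpable (π : ℕ → V) : Prop :=
  ∀ m m', G.SuccessiveCP π m m' →
    ∃ i j, m ≤ i ∧ i < j ∧ j ≤ m' - 1 ∧ π i = π j ∧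
      0 < ∑ k ∈ Finset.Ico i j, G.cst (π k) (π (k + 1))

end CBG

namespace CBGAux

attribute [local instance] Classical.propDecidable

variable {V : Type} [Fintype V] (G : CBG V)

/-- cost of the walk `f` over positions `[a, b)` (edges `f k → f (k+1)`). -/
def costW (f : ℕ → V) (a b : ℕ) : ℕ := ∑ k ∈ Finset.Ico a b, G.cst (f k) (f (k + 1))

def PumpAt (π : ℕ → V) (m m' : ℕ) : Prop :=
  ∃ i j, m ≤ i ∧ i < j ∧ j ≤ m' - 1 ∧ π i = π j ∧ 0 < costW G π i j

def PUp (π : ℕ → V) (b : ℕ) : Prop :=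
  ∀ m m', G.SuccessiveCP π m m' → m' ≤ b → PumpAt G π m m'

lemma pumpable_PUp {π : ℕ → V} (h : G.Pumpable π) (b : ℕ) : PUp G π b := by
  intro m m' hs _; exact h m m' hs

lemma costW_congr {f g : ℕ → V} {a b : ℕ} (h : ∀ k, a ≤ k → k ≤ b → f k = g k) :
    costW G f a b = costW G g a b := by
  unfold costW
  refine Finset.sum_congr rfl ?_
  intro k hk
  rw [Finset.mem_Ico] at hk
  rw [h k hk.1 (by omega), h (k+1) (by omega) (by omega)]

lemma costW_shift {f g : ℕ → V} {a b t : ℕ} (h : ∀ k, a ≤ k → k ≤ b → g k = f (k + t)) :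
    costW G g a b = costW G f (a + t) (b + t) := by
  unfold costW
  rw [Finset.sum_Ico_eq_sum_range, Finset.sum_Ico_eq_sum_range]
  have hb : b + t - (a + t) = b - a := by omega
  rw [hb]
  refine Finset.sum_congr rfl ?_
  intro k hk
  rw [Finset.mem_range] at hk
  rw [h (a + k) (by omega) (by omega), h (a + k + 1) (by omega) (by omega)]
  congr 2 <;> omega

/-- cut out `[i, i+δ)` from a sequence. -/
def cutP (f : ℕ → V) (i δ : ℕ) : ℕ → V := fun n => if n < i then f n else f (n + δ)

variable {G}

lemma cut_eval_le {f : ℕ → V} {i δ : ℕ} (hij : f i = f (i + δ)) {n : ℕ} (hn : n ≤ i) :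
    cutP f i δ n = f n := by
  unfold cutP
  rcases lt_or_eq_of_le hn with h | h
  · simp [h]
  · subst h; simp [hij.symm]

lemma cut_eval_ge {f : ℕ → V} {i δ : ℕ} {n : ℕ} (hn : i ≤ n) :
    cutP f i δ n = f (n + δ) := by
  unfold cutP; simp [Nat.not_lt.mpr hn]

lemma cut_cp_le {π : ℕ → V} {i δ : ℕ} (hij : π i = π (i + δ)) {k : ℕ} (hk : k ≤ i) :
    G.Changepoint (cutP π i δ) k ↔ G.Changepoint π k := by
  unfold CBG.Changepoint
  rw [cut_eval_le hij (by omega : k - 1 ≤ i), cut_eval_le hij hk]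

lemma cut_cp_gt {π : ℕ → V} {i δ : ℕ} (hij : π i = π (i + δ)) {k : ℕ} (hk : i < k) :
    G.Changepoint (cutP π i δ) k ↔ G.Changepoint π (k + δ) := by
  unfold CBG.Changepoint
  rw [cut_eval_ge (by omega : i ≤ k), cut_eval_ge (by omega : i ≤ k - 1)]
  have h1 : k - 1 + δ = k + δ - 1 := by omega
  rw [h1]
  constructor
  · rintro (h | h); · omega
    · exact Or.inr h
  · rintro (h | h); · omega
    · exact Or.inr h

lemma cut_isPath {π : ℕ → V} {i δ : ℕ} (hij : π i = π (i + δ)) (h : G.IsPath π) :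
    G.IsPath (cutP π i δ) := by
  constructor
  · rw [cut_eval_le hij (Nat.zero_le i)]; exact h.1
  · intro n
    rcases Nat.lt_or_ge n i with hn | hn
    · rw [cut_eval_le hij (by omega : n ≤ i), cut_eval_le hij (by omega : n + 1 ≤ i)]
      exact h.2 n
    · rw [cut_eval_ge hn, cut_eval_ge (by omega : i ≤ n + 1)]
      have : n + 1 + δ = n + δ + 1 := by omega
      rw [this]
      exact h.2 (n + δ)

lemma cut_PUp_cp {π : ℕ → V} {i δ b : ℕ} (hδ : 0 < δ) (hij : π i = π (i + δ))
    (hi : G.Changepoint π i) (hj : G.Changepoint π (i + δ)) (hib : i + δ ≤ b) (h : PUp G π b) :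
    PUp G (cutP π i δ) (b - δ) := by
  intro m₁ m₂ hs hb2
  obtain ⟨hlt, hc1, hc2, hbet⟩ := hs
  rcases Nat.lt_or_ge i m₂ with him2 | him2
  · -- m₂ > i
    rcases Nat.lt_or_ge m₁ i with him1 | him1
    · -- straddle: impossible since i is a changepoint of the cut path
      exact absurd ((cut_cp_le hij le_rfl).mpr hi) (hbet i him1 him2)
    · -- m₁ ≥ i : shifted pair
      have hc1' : G.Changepoint π (m₁ + δ) := by
        rcases Nat.lt_or_ge i m₁ with h' | h'
        · exact (cut_cp_gt hij h').mp hc1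
        · have hmi : m₁ = i := by omega
          subst hmi; exact hj
      have hc2' : G.Changepoint π (m₂ + δ) := (cut_cp_gt hij (by omega)).mp hc2
      have hpair : G.SuccessiveCP π (m₁ + δ) (m₂ + δ) := by
        refine ⟨by omega, hc1', hc2', ?_⟩
        intro l hl1 hl2 hcl
        have hcut : G.Changepoint (cutP π i δ) (l - δ) := by
          rw [cut_cp_gt hij (by omega : i < l - δ), show l - δ + δ = l by omega]
          exact hcl
        exact hbet (l - δ) (by omega) (by omega) hcut
      obtain ⟨i₁, j₁, h1, h2, h3, h4, h5⟩ := h _ _ hpair (by omega)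
      refine ⟨i₁ - δ, j₁ - δ, by omega, by omega, by omega, ?_, ?_⟩
      · rw [cut_eval_ge (by omega : i ≤ i₁ - δ), cut_eval_ge (by omega : i ≤ j₁ - δ),
          show i₁ - δ + δ = i₁ by omega, show j₁ - δ + δ = j₁ by omega]
        exact h4
      · rw [costW_shift G (f := π) (t := δ)
          (fun k hk1 hk2 => cut_eval_ge (by omega : i ≤ k)),
          show i₁ - δ + δ = i₁ by omega, show j₁ - δ + δ = j₁ by omega]
        exact h5
  · -- m₂ ≤ i : direct pair
    have hpair : G.SuccessiveCP π m₁ m₂ := by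
      refine ⟨hlt, (cut_cp_le hij (by omega)).mp hc1, (cut_cp_le hij him2).mp hc2, ?_⟩
      intro l hl1 hl2 hcl
      exact hbet l hl1 hl2 ((cut_cp_le hij (by omega)).mpr hcl)
    obtain ⟨i₁, j₁, h1, h2, h3, h4, h5⟩ := h m₁ m₂ hpair (by omega)
    refine ⟨i₁, j₁, h1, h2, h3, ?_, ?_⟩
    · rw [cut_eval_le hij (by omega), cut_eval_le hij (by omega)]; exact h4
    · rw [costW_congr G (g := π) (fun k hk1 hk2 => cut_eval_le hij (by omega))]
      exact h5

lemma cut_PUp_nocp {π : ℕ → V} {i δ b : ℕ} (hδ : 0 < δ) (hij : π i = π (i + δ))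
    (hib : i + δ ≤ b) (hnc : ∀ l, i < l → l ≤ b → ¬ G.Changepoint π l) (h : PUp G π b) :
    PUp G (cutP π i δ) (b - δ) := by
  intro m₁ m₂ hs hb2
  obtain ⟨hlt, hc1, hc2, hbet⟩ := hs
  rcases Nat.lt_or_ge i m₂ with him2 | him2
  · exact absurd ((cut_cp_gt hij him2).mp hc2)
      (hnc (m₂ + δ) (by omega) (by omega))
  · have hpair : G.SuccessiveCP π m₁ m₂ := by
      refine ⟨hlt, (cut_cp_le hij (by omega)).mp hc1, (cut_cp_le hij him2).mp hc2, ?_⟩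
      intro l hl1 hl2 hcl
      exact hbet l hl1 hl2 ((cut_cp_le hij (by omega)).mpr hcl)
    obtain ⟨i₁, j₁, h1, h2, h3, h4, h5⟩ := h m₁ m₂ hpair (by omega)
    refine ⟨i₁, j₁, h1, h2, h3, ?_, ?_⟩
    · rw [cut_eval_le hij (by omega), cut_eval_le hij (by omega)]; exact h4
    · rw [costW_congr G (g := π) (fun k hk1 hk2 => cut_eval_le hij (by omega))]
      exact h5

/-! ### Splicing a replacement block into a path -/

/-- Replace the segment `[c, c+K+δ]` (i.e. block `[c, c']` with `c' = c+K+1+δ`)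
by the walk `g` with `K` edges. -/
def spl (π : ℕ → V) (c : ℕ) (g : ℕ → V) (K δ : ℕ) : ℕ → V :=
  fun n => if n < c then π n else if n ≤ c + K then g (n - c) else π (n + δ)

section Spl

variable {π : ℕ → V} {c K δ : ℕ} {g : ℕ → V}
variable (hg0 : g 0 = π c) (hgK : g K = π (c + K + δ))

include hg0 in
lemma spl_eval_le {n : ℕ} (hn : n ≤ c) : spl π c g K δ n = π n := by
  unfold spl
  rcases lt_or_eq_of_le hn with h | h
  · simp [h]
  · subst h; simp [hg0]

lemma spl_eval_mid {n : ℕ} (h1 : c ≤ n) (h2 : n ≤ c + K) : spl π c g K δ n = g (n - c) := by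
  unfold spl; simp [Nat.not_lt.mpr h1, h2]

include hgK in
lemma spl_eval_ge {n : ℕ} (hn : c + K + 1 ≤ n) : spl π c g K δ n = π (n + δ) := by
  unfold spl
  rw [if_neg (by omega), if_neg (by omega)]

include hg0 in
lemma spl_cp_le {k : ℕ} (hk : k ≤ c) :
    G.Changepoint (spl π c g K δ) k ↔ G.Changepoint π k := by
  unfold CBG.Changepoint
  rw [spl_eval_le hg0 (by omega : k - 1 ≤ c), spl_eval_le hg0 hk]

lemma spl_cp_mid (hlabg : ∀ l, l ≤ K → (G.lab (g l) ↔ G.lab (π c)))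
    {k : ℕ} (h1 : c < k) (h2 : k ≤ c + K) : ¬ G.Changepoint (spl π c g K δ) k := by
  unfold CBG.Changepoint
  rw [spl_eval_mid (by omega) (by omega), spl_eval_mid (by omega) h2]
  rintro (h | h)
  · omega
  · exact h ((hlabg (k - 1 - c) (by omega)).trans (hlabg (k - c) (by omega)).symm)

include hgK in
lemma spl_cp_end :
    G.Changepoint (spl π c g K δ) (c + K + 1) ↔ G.Changepoint π (c + K + 1 + δ) := by
  unfold CBG.Changepoint
  rw [spl_eval_ge hgK le_rfl, spl_eval_mid (by omega) (by omega : c + K + 1 - 1 ≤ c + K),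
    show c + K + 1 - 1 - c = K by omega, hgK]
  constructor
  · rintro (h | h); · omega
    · refine Or.inr ?_; rwa [show c + K + 1 + δ - 1 = c + K + δ by omega]
  · rintro (h | h); · omega
    · refine Or.inr ?_; rwa [show c + K + 1 + δ - 1 = c + K + δ by omega] at h

include hgK in
lemma spl_cp_gt {k : ℕ} (hk : c + K + 1 < k) :
    G.Changepoint (spl π c g K δ) k ↔ G.Changepoint π (k + δ) := by
  unfold CBG.Changepoint
  rw [spl_eval_ge hgK (n := k) (by omega), spl_eval_ge hgK (n := k - 1) (by omega),
    show k - 1 + δ = k + δ - 1 by omega]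
  constructor
  · rintro (h | h); · omega
    · exact Or.inr h
  · rintro (h | h); · omega
    · exact Or.inr h

include hg0 hgK in
lemma spl_isPath (hch : ∀ l, l < K → G.E (g l) (g (l + 1))) (hπ : G.IsPath π) :
    G.IsPath (spl π c g K δ) := by
  constructor
  · rw [spl_eval_le hg0 (Nat.zero_le c)]; exact hπ.1
  · intro n
    rcases Nat.lt_or_ge n c with hn | hn
    · rw [spl_eval_le hg0 (by omega), spl_eval_le hg0 (by omega : n + 1 ≤ c)]
      exact hπ.2 n
    · rcases Nat.lt_or_ge n (c + K) with hn2 | hn2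
      · rw [spl_eval_mid (by omega) (by omega), spl_eval_mid (by omega) (by omega),
          show n + 1 - c = n - c + 1 by omega]
        exact hch (n - c) (by omega)
      · rcases Nat.lt_or_ge n (c + K + 1) with hn3 | hn3
        · have hn4 : n = c + K := by omega
          subst hn4
          rw [spl_eval_mid (by omega) (by omega), spl_eval_ge hgK (by omega),
            show c + K - c = K by omega, hgK, show c + K + 1 + δ = c + K + δ + 1 by omega]
          exact hπ.2 (c + K + δ)
        · rw [spl_eval_ge hgK (by omega), spl_eval_ge hgK (by omega),
            show n + 1 + δ = n + δ + 1 by omega]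
          exact hπ.2 (n + δ)

include hg0 hgK in
lemma spl_PUp {b : ℕ} (hδ : 0 < δ)
    (hlabg : ∀ l, l ≤ K → (G.lab (g l) ↔ G.lab (π c)))
    (hblock : G.SuccessiveCP π c (c + K + 1 + δ))
    (hpumpg : ∃ a b', a < b' ∧ b' ≤ K ∧ g a = g b' ∧ 0 < costW G g a b')
    (hb : c + K + 1 + δ ≤ b) (h : PUp G π b) :
    PUp G (spl π c g K δ) (b - δ) := by
  have hcpc : G.Changepoint (spl π c g K δ) c := (spl_cp_le hg0 le_rfl).mpr hblock.2.1
  have hcpe : G.Changepoint (spl π c g K δ) (c + K + 1) :=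
    (spl_cp_end hgK).mpr hblock.2.2.1
  intro m₁ m₂ hs hb2
  obtain ⟨hlt, hc1, hc2, hbet⟩ := hs
  rcases Nat.lt_or_ge c m₂ with him2 | him2
  · rcases Nat.lt_or_ge m₂ (c + K + 1) with hm2e | hm2e
    · -- c < m₂ ≤ c + K : impossible
      exact absurd hc2 (spl_cp_mid hlabg him2 (by omega))
    rcases Nat.eq_or_lt_of_le hm2e with hm2e | hm2e
    · -- m₂ = c + K + 1 : the new block pair; show m₁ = c
      have hm1 : m₁ = c := by
        rcases Nat.lt_or_ge m₁ c with h' | h'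
        · exact absurd hcpc (hbet c h' (by omega))
        · rcases Nat.eq_or_lt_of_le h' with h'' | h''
          · omega
          · exact absurd hc1 (spl_cp_mid hlabg h'' (by omega))
      subst hm1; rw [← hm2e]
      obtain ⟨a, b', ha1, ha2, ha3, ha4⟩ := hpumpg
      refine ⟨m₁ + a, m₁ + b', by omega, by omega, by omega, ?_, ?_⟩
      · rw [spl_eval_mid (by omega) (by omega), spl_eval_mid (by omega) (by omega),
          show m₁ + a - m₁ = a by omega, show m₁ + b' - m₁ = b' by omega]
        exact ha3
      · rw [show m₁ + a = a + m₁ by omega, show m₁ + b' = b' + m₁ by omega,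
          ← costW_shift G (g := g) (t := m₁)
            (fun k hk1 hk2 => by
              rw [spl_eval_mid (by omega) (by omega), show k + m₁ - m₁ = k by omega])]
        exact ha4
    · -- m₂ > c + K + 1 : shifted pair
      have hm1 : c + K + 1 ≤ m₁ := by
        by_contra h'
        exact absurd hcpe (hbet (c + K + 1) (by omega) (by omega))
      have hc1' : G.Changepoint π (m₁ + δ) := by
        rcases Nat.eq_or_lt_of_le hm1 with h' | h'
        · rw [← h']; rw [← h'] at hc1; exact (spl_cp_end hgK).mp hc1
        · exact (spl_cp_gt hgK h').mp hc1
      have hc2' : G.Changepoint π (m₂ + δ) := (spl_cp_gt hgK (by omega)).mp hc2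
      have hpair : G.SuccessiveCP π (m₁ + δ) (m₂ + δ) := by
        refine ⟨by omega, hc1', hc2', ?_⟩
        intro l hl1 hl2 hcl
        have hcut : G.Changepoint (spl π c g K δ) (l - δ) := by
          rw [spl_cp_gt hgK (by omega : c + K + 1 < l - δ), show l - δ + δ = l by omega]
          exact hcl
        exact hbet (l - δ) (by omega) (by omega) hcut
      obtain ⟨i₁, j₁, h1, h2, h3, h4, h5⟩ := h _ _ hpair (by omega)
      refine ⟨i₁ - δ, j₁ - δ, by omega, by omega, by omega, ?_, ?_⟩
      · rw [spl_eval_ge hgK (by omega : c + K + 1 ≤ i₁ - δ),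
          spl_eval_ge hgK (by omega : c + K + 1 ≤ j₁ - δ),
          show i₁ - δ + δ = i₁ by omega, show j₁ - δ + δ = j₁ by omega]
        exact h4
      · rw [costW_shift G (f := π) (t := δ)
          (fun k hk1 hk2 => spl_eval_ge hgK (by omega : c + K + 1 ≤ k)),
          show i₁ - δ + δ = i₁ by omega, show j₁ - δ + δ = j₁ by omega]
        exact h5
  · -- m₂ ≤ c : direct pair
    have hpair : G.SuccessiveCP π m₁ m₂ := by
      refine ⟨hlt, (spl_cp_le hg0 (by omega)).mp hc1, (spl_cp_le hg0 him2).mp hc2, ?_⟩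
      intro l hl1 hl2 hcl
      exact hbet l hl1 hl2 ((spl_cp_le hg0 (by omega)).mpr hcl)
    obtain ⟨i₁, j₁, h1, h2, h3, h4, h5⟩ := h m₁ m₂ hpair (by omega)
    refine ⟨i₁, j₁, h1, h2, h3, ?_, ?_⟩
    · rw [spl_eval_le hg0 (by omega), spl_eval_le hg0 (by omega)]; exact h4
    · rw [costW_congr G (g := π) (fun k hk1 hk2 => spl_eval_le hg0 (by omega))]
      exact h5

end Spl

/-! ### Walk shortening -/

def ChainN (R : V → V → Prop) (f : ℕ → V) (k : ℕ) : Prop := ∀ l, l < k → R (f l) (f (l + 1))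

lemma chain_cut {R : V → V → Prop} {f : ℕ → V} {k a b : ℕ} (hc : ChainN R f k)
    (hab : f a = f b) (hlt : a < b) (hbk : b ≤ k) :
    ChainN R (cutP f a (b - a)) (k - (b - a)) := by
  have hab' : f a = f (a + (b - a)) := by rw [show a + (b - a) = b by omega]; exact hab
  intro l hl
  rcases Nat.lt_or_ge l a with h' | h'
  · rw [cut_eval_le hab' (by omega), cut_eval_le hab' (by omega : l + 1 ≤ a)]
    exact hc l (by omega)
  · rw [cut_eval_ge h', cut_eval_ge (by omega : a ≤ l + 1),
      show l + 1 + (b - a) = l + (b - a) + 1 by omega]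
    exact hc (l + (b - a)) (by omega)

lemma exists_rep (f : ℕ → V) (k : ℕ) (hk : Fintype.card V ≤ k) :
    ∃ a b, a < b ∧ b ≤ k ∧ f a = f b := by
  have h := Fintype.exists_ne_map_eq_of_card_lt (fun i : Fin (k + 1) => f i.1)
    (by simp; omega)
  obtain ⟨x, y, hxy, hfxy⟩ := h
  rcases Nat.lt_or_ge x.1 y.1 with h' | h'
  · exact ⟨x.1, y.1, h', by omega, hfxy⟩
  · have : y.1 < x.1 := by
      rcases Nat.eq_or_lt_of_le h' with h'' | h''
      · exact absurd (Fin.ext h''.symm) hxy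
      · exact h''
    exact ⟨y.1, x.1, this, by omega, hfxy.symm⟩

lemma reachShort {R : V → V → Prop} : ∀ k : ℕ, ∀ f : ℕ → V, ChainN R f k →
    ∃ g m, ChainN R g m ∧ g 0 = f 0 ∧ g m = f k ∧ m ≤ Fintype.card V - 1 ∧
      ∀ l, l ≤ m → ∃ l', l' ≤ k ∧ g l = f l' := by
  intro k
  induction k using Nat.strong_induction_on with
  | _ k ih =>
    intro f hc
    rcases Nat.lt_or_ge k (Fintype.card V) with hk | hk
    · exact ⟨f, k, hc, rfl, rfl, by omega, fun l hl => ⟨l, hl, rfl⟩⟩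
    · obtain ⟨a, b, hab, hbk, hfab⟩ := exists_rep f k hk
      have hab' : f a = f (a + (b - a)) := by rw [show a + (b - a) = b by omega]; exact hfab
      obtain ⟨g, m, hg1, hg2, hg3, hg4, hg5⟩ :=
        ih (k - (b - a)) (by omega) (cutP f a (b - a)) (chain_cut hc hfab hab hbk)
      refine ⟨g, m, hg1, ?_, ?_, hg4, ?_⟩
      · rw [hg2, cut_eval_le hab' (Nat.zero_le a)]
      · rw [hg3, cut_eval_ge (by omega : a ≤ k - (b - a)),
          show k - (b - a) + (b - a) = k by omega]
      · intro l hl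
        obtain ⟨l', hl', heq⟩ := hg5 l hl
        rcases Nat.lt_or_ge l' a with h' | h'
        · exact ⟨l', by omega, by rw [heq, cut_eval_le hab' (by omega)]⟩
        · exact ⟨l' + (b - a), by omega, by rw [heq, cut_eval_ge h']⟩

lemma cycleShort : ∀ k : ℕ, ∀ f : ℕ → V, ChainN G.E f k → f 0 = f k →
    0 < costW G f 0 k →
    ∃ g m, ChainN G.E g m ∧ g 0 = g m ∧ 0 < m ∧ m ≤ Fintype.card V ∧
      0 < costW G g 0 m ∧ ∀ l, l ≤ m → ∃ l', l' ≤ k ∧ g l = f l' := by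
  intro k
  induction k using Nat.strong_induction_on with
  | _ k ih =>
    intro f hc hcl hcost
    rcases Nat.lt_or_ge (Fintype.card V) k with hk | hk
    · -- long: find a repetition among positions 0..k-1
      obtain ⟨a, b, hab, hbk, hfab⟩ := exists_rep f (k - 1) (by omega)
      have hab' : f a = f (a + (b - a)) := by rw [show a + (b - a) = b by omega]; exact hfab
      -- cost decomposition
      have hsplit : costW G f 0 k = costW G f 0 a + costW G f a b + costW G f b k := by
        unfold costW
        rw [← Finset.sum_Ico_consecutive _ (Nat.zero_le a) (by omega : a ≤ k),
          ← Finset.sum_Ico_consecutive _ (by omega : a ≤ b) (by omega : b ≤ k)]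
        omega
      set δ := b - a with hδ
      have houter_chain : ChainN G.E (cutP f a δ) (k - δ) := chain_cut hc hfab hab (by omega)
      have houter_cl : cutP f a δ 0 = cutP f a δ (k - δ) := by
        rw [cut_eval_le hab' (Nat.zero_le a), cut_eval_ge (by omega : a ≤ k - δ),
          show k - δ + δ = k by omega]
        exact hcl
      have houter_cost : costW G (cutP f a δ) 0 (k - δ) =
          costW G f 0 a + costW G f b k := by
        unfold costW
        rw [← Finset.sum_Ico_consecutive _ (Nat.zero_le a) (by omega : a ≤ k - δ)]
        congr 1
        · refine Finset.sum_congr rfl ?_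
          intro l hl
          rw [Finset.mem_Ico] at hl
          rw [cut_eval_le hab' (by omega), cut_eval_le hab' (by omega : l + 1 ≤ a)]
        · rw [show (Finset.Ico b k) = Finset.Ico (a + δ) (k - δ + δ) by congr 1 <;> omega,
            ← costW, ← costW, ← costW_shift G (g := cutP f a δ)
              (fun l hl1 hl2 => cut_eval_ge (by omega : a ≤ l))]
      have hinner_chain : ChainN G.E (fun n => f (n + a)) δ := by
        intro l hl
        have h' := hc (l + a) (by omega)
        rwa [show l + a + 1 = l + 1 + a by omega] at h' 
      have hinner_cl : (fun n => f (n + a)) 0 = (fun n => f (n + a)) δ := by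
        simp only [Nat.zero_add]
        rw [show δ + a = b by omega]; exact hfab
      have hinner_cost : costW G (fun n => f (n + a)) 0 δ = costW G f a b := by
        rw [costW_shift G (f := f) (t := a) (fun l hl1 hl2 => rfl),
          show (0 : ℕ) + a = a by omega, show δ + a = b by omega]
      rcases (Nat.eq_zero_or_pos (costW G f a b)).symm with hpos | hzero
      · -- recurse on inner cycle
        obtain ⟨g, m, h1, h2, h3, h4, h5, h6⟩ := ih δ (by omega) (fun n => f (n + a))
          hinner_chain hinner_cl (by rw [hinner_cost]; exact hpos)
        refine ⟨g, m, h1, h2, h3, h4, h5, ?_⟩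
        intro l hl
        obtain ⟨l', hl', heq⟩ := h6 l hl
        exact ⟨l' + a, by omega, heq⟩
      · -- recurse on outer cycle
        obtain ⟨g, m, h1, h2, h3, h4, h5, h6⟩ := ih (k - δ) (by omega) (cutP f a δ)
          houter_chain houter_cl (by rw [houter_cost]; omega)
        refine ⟨g, m, h1, h2, h3, h4, h5, ?_⟩
        intro l hl
        obtain ⟨l', hl', heq⟩ := h6 l hl
        rcases Nat.lt_or_ge l' a with h' | h'
        · exact ⟨l', by omega, by rw [heq, cut_eval_le hab' (by omega)]⟩
        · exact ⟨l' + δ, by omega, by rw [heq, cut_eval_ge h']⟩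
    · -- short enough already
      have hkpos : 0 < k := by
        rcases Nat.eq_zero_or_pos k with h | h
        · subst h; simp [costW] at hcost
        · exact h
      exact ⟨f, k, hc, hcl, hkpos, hk, hcost, fun l hl => ⟨l, hl, rfl⟩⟩

/-! ### Concatenation of four walks -/

def cat4 (p1 : ℕ → V) (k1 : ℕ) (p2 : ℕ → V) (k2 : ℕ) (p3 : ℕ → V) (k3 : ℕ) (p4 : ℕ → V) :
    ℕ → V :=
  fun n => if n ≤ k1 then p1 n else if n ≤ k1 + k2 then p2 (n - k1)
    else if n ≤ k1 + k2 + k3 then p3 (n - k1 - k2) else p4 (n - k1 - k2 - k3)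

section Cat4

variable {p1 p2 p3 p4 : ℕ → V} {k1 k2 k3 : ℕ}
variable (e12 : p1 k1 = p2 0) (e23 : p2 k2 = p3 0) (e34 : p3 k3 = p4 0)

lemma cat4_eval1 {n : ℕ} (hn : n ≤ k1) : cat4 p1 k1 p2 k2 p3 k3 p4 n = p1 n := by
  unfold cat4; rw [if_pos hn]

include e12 in
lemma cat4_eval2 {n : ℕ} (h1 : k1 ≤ n) (h2 : n ≤ k1 + k2) :
    cat4 p1 k1 p2 k2 p3 k3 p4 n = p2 (n - k1) := by
  unfold cat4
  rcases Nat.lt_or_ge k1 n with h | h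
  · rw [if_neg (by omega), if_pos h2]
  · rw [if_pos (by omega), show n = k1 by omega, e12, Nat.sub_self]

include e12 e23 in
lemma cat4_eval3 {n : ℕ} (h1 : k1 + k2 ≤ n) (h2 : n ≤ k1 + k2 + k3) :
    cat4 p1 k1 p2 k2 p3 k3 p4 n = p3 (n - k1 - k2) := by
  unfold cat4
  rcases Nat.lt_or_ge (k1 + k2) n with h | h
  · rw [if_neg (by omega), if_neg (by omega), if_pos h2]
  · have hn : n = k1 + k2 := by omega
    subst hn
    rcases Nat.lt_or_ge k1 (k1 + k2) with h' | h'
    · rw [if_neg (by omega), if_pos le_rfl, show k1 + k2 - k1 = k2 by omega, e23]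
      congr 1
      omega
    · have hk2 : k2 = 0 := by omega
      subst hk2
      rw [if_pos (by omega : k1 + 0 ≤ k1)]
      have h0 : p1 k1 = p3 0 := e12.trans (by simpa using e23)
      simpa using h0

include e12 e23 e34 in
lemma cat4_eval4 {n : ℕ} (h1 : k1 + k2 + k3 ≤ n) :
    cat4 p1 k1 p2 k2 p3 k3 p4 n = p4 (n - k1 - k2 - k3) := by
  rcases Nat.lt_or_ge (k1 + k2 + k3) n with h | h
  · unfold cat4
    rw [if_neg (by omega), if_neg (by omega), if_neg (by omega)]
  · have hn : n = k1 + k2 + k3 := by omega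
    subst hn
    rw [cat4_eval3 e12 e23 (by omega) le_rfl, show k1 + k2 + k3 - k1 - k2 = k3 by omega, e34]
    congr 1
    omega

include e12 e23 e34 in
lemma cat4_chain {R : V → V → Prop} {m1 m2 m3 m4 : ℕ} (hm1 : m1 = k1) (hm2 : m2 = k2)
    (hm3 : m3 = k3)
    (h1 : ChainN R p1 k1) (h2 : ChainN R p2 k2) (h3 : ChainN R p3 k3)
    (h4 : ChainN R p4 m4) :
    ChainN R (cat4 p1 k1 p2 k2 p3 k3 p4) (k1 + k2 + k3 + m4) := by
  intro l hl
  rcases Nat.lt_or_ge l k1 with h | h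
  · rw [cat4_eval1 (by omega), cat4_eval1 (by omega : l + 1 ≤ k1)]
    exact h1 l h
  rcases Nat.lt_or_ge l (k1 + k2) with h' | h'
  · rw [cat4_eval2 e12 (by omega) (by omega), cat4_eval2 e12 (by omega) (by omega),
      show l + 1 - k1 = l - k1 + 1 by omega]
    exact h2 (l - k1) (by omega)
  rcases Nat.lt_or_ge l (k1 + k2 + k3) with h'' | h''
  · rw [cat4_eval3 e12 e23 (by omega) (by omega), cat4_eval3 e12 e23 (by omega) (by omega),
      show l + 1 - k1 - k2 = l - k1 - k2 + 1 by omega]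
    exact h3 (l - k1 - k2) (by omega)
  · rw [cat4_eval4 e12 e23 e34 (by omega), cat4_eval4 e12 e23 e34 (by omega),
      show l + 1 - k1 - k2 - k3 = l - k1 - k2 - k3 + 1 by omega]
    exact h4 (l - k1 - k2 - k3) (by omega)

include e12 e23 in
lemma cat4_cost2 (G : CBG V) :
    costW G (cat4 p1 k1 p2 k2 p3 k3 p4) k1 (k1 + k2) = costW G p2 0 k2 := by
  have h := costW_shift G (f := cat4 p1 k1 p2 k2 p3 k3 p4) (g := p2) (a := 0) (b := k2)
    (t := k1) (fun l _ hl2 => by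
      rw [cat4_eval2 e12 (by omega) (by omega)]
      congr 1
      omega)
  rw [Nat.zero_add, Nat.add_comm k2 k1] at h
  exact h.symm

include e12 e23 e34 in
lemma cat4_cost3 (G : CBG V) :
    costW G (cat4 p1 k1 p2 k2 p3 k3 p4) (k1 + k2) (k1 + k2 + k3) = costW G p3 0 k3 := by
  have h := costW_shift G (f := cat4 p1 k1 p2 k2 p3 k3 p4) (g := p3) (a := 0) (b := k3)
    (t := k1 + k2) (fun l _ hl2 => by
      rw [cat4_eval3 e12 e23 (by omega) (by omega)]
      congr 1
      omega)
  rw [Nat.zero_add, Nat.add_comm k3 (k1 + k2)] at h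
  exact h.symm

end Cat4

/-! ### Block shortening -/

lemma blockShorten {π : ℕ → V} {c c' : ℕ} (w : ℕ) (hw1 : c ≤ w) (hw2 : w ≤ c' - 1)
    (hcc : c < c')
    (hchain : ∀ n, G.E (π n) (π (n + 1)))
    (hlab : ∀ l, c ≤ l → l < c' → (G.lab (π l) ↔ G.lab (π c)))
    (hpump : PumpAt G π c c') :
    ∃ g K, ChainN G.E g K ∧ g 0 = π c ∧ g K = π (c' - 1) ∧ K + 1 ≤ 4 * Fintype.card V ∧
      (∀ l, l ≤ K → (G.lab (g l) ↔ G.lab (π c))) ∧ (∃ p, p ≤ K ∧ g p = π w) ∧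
      (∃ a b', a < b' ∧ b' ≤ K ∧ g a = g b' ∧ 0 < costW G g a b') := by
  have hcard : 0 < Fintype.card V := Fintype.card_pos_iff.mpr ⟨π c⟩
  obtain ⟨i, j, hi, hij, hj, heq, hcost⟩ := hpump
  -- shorten the pumping cycle
  obtain ⟨Cg, mC, hC1, hC2, hC3, hC4, hC5, hC6⟩ := cycleShort (j - i) (fun l => π (l + i))
    (fun l _ => by
      have h' := hchain (l + i)
      rwa [show l + i + 1 = l + 1 + i by omega] at h')
    (by show π (0 + i) = π (j - i + i); rw [Nat.zero_add, show j - i + i = j by omega]; exact heq)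
    (by
      rw [costW_shift G (f := π) (t := i) (fun k _ _ => rfl), Nat.zero_add,
        show j - i + i = j by omega]
      exact hcost)
  obtain ⟨l₀, hl₀, hu⟩ := hC6 0 (Nat.zero_le mC)
  set d := l₀ + i with hd
  have hdc : c ≤ d := by omega
  have hdj : d ≤ c' - 1 := by omega
  have huC : Cg mC = π d := by rw [← hC2]; exact hu
  -- generic short path pieces
  have mkseg : ∀ x y : ℕ, c ≤ x → x ≤ y → y ≤ c' - 1 →
      ∃ g m, ChainN G.E g m ∧ g 0 = π x ∧ g m = π y ∧ m ≤ Fintype.card V - 1 ∧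
        ∀ l, l ≤ m → (G.lab (g l) ↔ G.lab (π c)) := by
    intro x y hx hxy hy
    obtain ⟨g, m, h1, h2, h3, h4, h5⟩ := reachShort (R := G.E) (y - x) (fun l => π (l + x))
      (fun l _ => by
        have h' := hchain (l + x)
        rwa [show l + x + 1 = l + 1 + x by omega] at h')
    refine ⟨g, m, h1, by rw [h2, Nat.zero_add], by rw [h3, show y - x + x = y by omega], h4, ?_⟩
    intro l hl
    obtain ⟨l', hl', heq'⟩ := h5 l hl
    rw [heq']
    exact hlab (l' + x) (by omega) (by omega)
  have hClab : ∀ l, l ≤ mC → (G.lab (Cg l) ↔ G.lab (π c)) := by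
    intro l hl
    obtain ⟨l', hl', heq'⟩ := hC6 l hl
    rw [heq']
    exact hlab (l' + i) (by omega) (by omega)
  rcases le_or_gt w d with hwd | hwd
  · -- order c → w → d → (cycle) → c' - 1
    obtain ⟨g1, m1, h11, h12, h13, h14, h15⟩ := mkseg c w le_rfl hw1 hw2
    obtain ⟨g2, m2, h21, h22, h23, h24, h25⟩ := mkseg w d hw1 hwd hdj
    obtain ⟨g3, m3, h31, h32, h33, h34, h35⟩ := mkseg d (c' - 1) hdc hdj le_rfl
    have e12 : g1 m1 = g2 0 := by rw [h13, h22]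
    have e23 : g2 m2 = Cg 0 := by rw [h23, hu]
    have e34 : Cg mC = g3 0 := by rw [huC, h32]
    refine ⟨cat4 g1 m1 g2 m2 Cg mC g3, m1 + m2 + mC + m3,
      cat4_chain e12 e23 e34 rfl rfl rfl h11 h21 hC1 h31, ?_, ?_, by omega, ?_, ?_, ?_⟩
    · rw [cat4_eval1 (Nat.zero_le m1), h12]
    · rw [cat4_eval4 e12 e23 e34 (by omega),
        show m1 + m2 + mC + m3 - m1 - m2 - mC = m3 by omega, h33]
    · intro l hl
      rcases Nat.lt_or_ge l m1 with h | h
      · rw [cat4_eval1 (by omega)]; exact h15 l (by omega)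
      rcases Nat.lt_or_ge l (m1 + m2) with h' | h'
      · rw [cat4_eval2 e12 (by omega) (by omega)]; exact h25 (l - m1) (by omega)
      rcases Nat.lt_or_ge l (m1 + m2 + mC) with h'' | h''
      · rw [cat4_eval3 e12 e23 (by omega) (by omega)]; exact hClab (l - m1 - m2) (by omega)
      · rw [cat4_eval4 e12 e23 e34 (by omega)]; exact h35 (l - m1 - m2 - mC) (by omega)
    · exact ⟨m1, by omega, by rw [cat4_eval1 le_rfl, h13]⟩
    · refine ⟨m1 + m2, m1 + m2 + mC, by omega, by omega, ?_, ?_⟩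
      · rw [cat4_eval3 e12 e23 le_rfl (by omega), cat4_eval3 e12 e23 (by omega) le_rfl,
          show m1 + m2 - m1 - m2 = 0 by omega, show m1 + m2 + mC - m1 - m2 = mC by omega]
        exact hC2
      · rw [cat4_cost3 e12 e23 e34 G]
        exact hC5
  · -- order c → d → (cycle) → w → c' - 1
    obtain ⟨g1, m1, h11, h12, h13, h14, h15⟩ := mkseg c d le_rfl hdc hdj
    obtain ⟨g2, m2, h21, h22, h23, h24, h25⟩ := mkseg d w hdc (by omega) hw2
    obtain ⟨g3, m3, h31, h32, h33, h34, h35⟩ := mkseg w (c' - 1) hw1 hw2 le_rfl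
    have e12 : g1 m1 = Cg 0 := by rw [h13, hu]
    have e23 : Cg mC = g2 0 := by rw [huC, h22]
    have e34 : g2 m2 = g3 0 := by rw [h23, h32]
    refine ⟨cat4 g1 m1 Cg mC g2 m2 g3, m1 + mC + m2 + m3,
      cat4_chain e12 e23 e34 rfl rfl rfl h11 hC1 h21 h31, ?_, ?_, by omega, ?_, ?_, ?_⟩
    · rw [cat4_eval1 (Nat.zero_le m1), h12]
    · rw [cat4_eval4 e12 e23 e34 (by omega),
        show m1 + mC + m2 + m3 - m1 - mC - m2 = m3 by omega, h33]
    · intro l hl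
      rcases Nat.lt_or_ge l m1 with h | h
      · rw [cat4_eval1 (by omega)]; exact h15 l (by omega)
      rcases Nat.lt_or_ge l (m1 + mC) with h' | h'
      · rw [cat4_eval2 e12 (by omega) (by omega)]; exact hClab (l - m1) (by omega)
      rcases Nat.lt_or_ge l (m1 + mC + m2) with h'' | h''
      · rw [cat4_eval3 e12 e23 (by omega) (by omega)]; exact h25 (l - m1 - mC) (by omega)
      · rw [cat4_eval4 e12 e23 e34 (by omega)]; exact h35 (l - m1 - mC - m2) (by omega)
    · refine ⟨m1 + mC + m2, by omega, ?_⟩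
      rw [cat4_eval3 e12 e23 (by omega) le_rfl,
        show m1 + mC + m2 - m1 - mC = m2 by omega, h23]
    · refine ⟨m1, m1 + mC, by omega, by omega, ?_, ?_⟩
      · rw [cat4_eval2 e12 le_rfl (by omega), cat4_eval2 e12 (by omega) le_rfl,
          show m1 - m1 = 0 by omega, show m1 + mC - m1 = mC by omega]
        exact hC2
      · rw [cat4_cost2 e12 e23 G]
        exact hC5

/-! ### Changepoint utilities -/

lemma cp_zero (π : ℕ → V) : G.Changepoint π 0 := Or.inl rfl


lemma not_cp_iff {π : ℕ → V} {k : ℕ} (hk : 0 < k) :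
    ¬ G.Changepoint π k ↔ (G.lab (π (k - 1)) ↔ G.lab (π k)) := by
  unfold CBG.Changepoint
  constructor
  · intro h
    by_contra h'
    exact h (Or.inr h')
  · rintro h (h' | h')
    · omega
    · exact h' h


lemma block_label {π : ℕ → V} {m m' : ℕ} (h : G.SuccessiveCP π m m') :
    ∀ l, m ≤ l → l < m' → (G.lab (π l) ↔ G.lab (π m)) := by
  intro l hl
  induction l, hl using Nat.le_induction with
  | base => intro _; exact Iff.rfl
  | succ n hn ih =>
    intro hn'
    have hncp := h.2.2.2 (n + 1) (by omega) hn'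
    rw [not_cp_iff (by omega)] at hncp
    simp only [Nat.add_sub_cancel] at hncp
    exact hncp.symm.trans (ih (by omega))


lemma prev_cp {π : ℕ → V} {c : ℕ} (hc : G.Changepoint π c) (h0 : 0 < c) :
    ∃ c₀, G.SuccessiveCP π c₀ c := by
  have hne : ((Finset.range c).filter (fun l => G.Changepoint π l)).Nonempty :=
    ⟨0, by simp [Finset.mem_filter, Finset.mem_range, h0, cp_zero]⟩
  set c₀ := ((Finset.range c).filter (fun l => G.Changepoint π l)).max' hne with hc₀
  have hc₀mem := Finset.max'_mem _ hne
  rw [← hc₀] at hc₀mem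
  rw [Finset.mem_filter, Finset.mem_range] at hc₀mem
  refine ⟨c₀, hc₀mem.1, hc₀mem.2, hc, ?_⟩
  intro l hl1 hl2 hcl
  have : l ≤ c₀ := Finset.le_max' _ l (by simp [Finset.mem_filter, Finset.mem_range, hl2, hcl])
  omega


lemma climb {π : ℕ → V} {X B : ℕ}
    (hgap : ∀ c c', G.SuccessiveCP π c c' → c' ≤ X → c' - c ≤ B) :
    ∀ c, G.Changepoint π c → c ≤ X →
      c ≤ ((Finset.range c).filter (fun l => G.Changepoint π l)).card * B := by
  intro c
  induction c using Nat.strong_induction_on with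
  | _ c ih =>
    intro hc hcX
    rcases Nat.eq_zero_or_pos c with h0 | h0
    · omega
    obtain ⟨c₀, hs⟩ := prev_cp hc h0
    have hgap' := hgap c₀ c hs hcX
    have hlt : c₀ < c := hs.1
    have hih := ih c₀ hlt hs.2.1 (by omega)
    have hsub : (Finset.range c₀).filter (fun l => G.Changepoint π l) ⊆
        ((Finset.range c).filter (fun l => G.Changepoint π l)).erase c₀ := by
      intro x hx
      rw [Finset.mem_filter, Finset.mem_range] at hx
      rw [Finset.mem_erase, Finset.mem_filter, Finset.mem_range]
      exact ⟨by omega, by omega, hx.2⟩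
    have hcard : ((Finset.range c₀).filter (fun l => G.Changepoint π l)).card ≤
        ((Finset.range c).filter (fun l => G.Changepoint π l)).card - 1 := by
      have h1 := Finset.card_le_card hsub
      have h2 : c₀ ∈ (Finset.range c).filter (fun l => G.Changepoint π l) := by
        simp [Finset.mem_filter, Finset.mem_range, hlt, hs.2.1]
      have h3 := Finset.card_erase_of_mem h2
      omega
    have hpos : 0 < ((Finset.range c).filter (fun l => G.Changepoint π l)).card := by
      refine Finset.card_pos.mpr ⟨c₀, ?_⟩
      simp [Finset.mem_filter, Finset.mem_range, hlt, hs.2.1]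
    set N := ((Finset.range c).filter (fun l => G.Changepoint π l)).card
    have : c₀ ≤ (N - 1) * B := le_trans hih (Nat.mul_le_mul_right B hcard)
    have hNB : (N - 1) * B + B = N * B := by
      have : N - 1 + 1 = N := by omega
      calc (N - 1) * B + B = (N - 1 + 1) * B := by ring
        _ = N * B := by rw [this]
    omega

lemma inj_card {T : Finset ℕ} (π : ℕ → V)
    (hinj : ∀ a ∈ T, ∀ b ∈ T, π a = π b → a = b) : T.card ≤ Fintype.card V := by
  have h := Finset.card_le_card_of_injOn π (fun a _ => Finset.mem_univ (π a)) hinj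
  simpa using h

/-! ### Witnesses -/

variable (G) in
/-- Case-A witness (finitely many changepoints): a lasso whose loop stays in one
label class and visits `F` at the loop point. -/
def WitA (k : ℕ) : Prop :=
  ∃ π a b, G.IsPath π ∧ PUp G π b ∧ a < b ∧ π a = π b ∧ π a ∈ G.F ∧
    (∀ i, a ≤ i → i ≤ b → (G.lab (π i) ↔ G.lab (π a))) ∧ b = k

variable (G) in
/-- Case-B witness (infinitely many changepoints): a loop between equal-vertex
changepoints containing an `F`-visit. -/
def WitB (k : ℕ) : Prop :=
  ∃ π m mm f, G.IsPath π ∧ PUp G π mm ∧ G.Changepoint π m ∧ G.Changepoint π mm ∧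
    m < mm ∧ π m = π mm ∧ m ≤ f ∧ f < mm ∧ π f ∈ G.F ∧ mm = k

lemma PUp_mono {π : ℕ → V} {b b' : ℕ} (h : PUp G π b) (hb : b' ≤ b) : PUp G π b' :=
  fun m m' hs hm => h m m' hs (le_trans hm hb)

section Reductions

variable {π : ℕ → V}

/-- Cut between two equal-vertex changepoints located at positions `≤ a`. -/
lemma redA_cut {a b c c' : ℕ} (h1 : G.IsPath π) (h2 : PUp G π b) (h3 : a < b)
    (h4 : π a = π b) (h5 : π a ∈ G.F)
    (h6 : ∀ i, a ≤ i → i ≤ b → (G.lab (π i) ↔ G.lab (π a)))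
    (hc : G.Changepoint π c) (hc' : G.Changepoint π c') (hlt : c < c') (hca : c' ≤ a)
    (hee : π c = π c') : WitA G (b - (c' - c)) := by
  set δ := c' - c with hδ
  have hij : π c = π (c + δ) := by rwa [show c + δ = c' by omega]
  refine ⟨cutP π c δ, a - δ, b - δ, cut_isPath hij h1, ?_, by omega, ?_, ?_, ?_, rfl⟩
  · exact cut_PUp_cp (by omega) hij hc (by rwa [show c + δ = c' by omega]) (by omega) h2
  · rw [cut_eval_ge (by omega : c ≤ a - δ), cut_eval_ge (by omega : c ≤ b - δ),
      show a - δ + δ = a by omega, show b - δ + δ = b by omega]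
    exact h4
  · rw [cut_eval_ge (by omega : c ≤ a - δ), show a - δ + δ = a by omega]
    exact h5
  · intro i hi1 hi2
    rw [cut_eval_ge (by omega : c ≤ i), cut_eval_ge (by omega : c ≤ a - δ),
      show a - δ + δ = a by omega]
    exact h6 (i + δ) (by omega) (by omega)

/-- Cut between two equal vertices with no changepoint above the first
(used in the constant-label tail region). -/
lemma redA_cutnocp {a b i j : ℕ} (h1 : G.IsPath π) (h2 : PUp G π b) (h3 : a < b)
    (h4 : π a = π b) (h5 : π a ∈ G.F)
    (h6 : ∀ l, a ≤ l → l ≤ b → (G.lab (π l) ↔ G.lab (π a)))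
    (hij : i < j) (hjb : j ≤ b) (hside : j ≤ a ∨ a ≤ i) (hne : ¬ (i = a ∧ j = b))
    (hee : π i = π j) (hnc : ∀ l, i < l → l ≤ b → ¬ G.Changepoint π l) :
    WitA G (b - (j - i)) := by
  set δ := j - i with hδ
  have hij' : π i = π (i + δ) := by rwa [show i + δ = j by omega]
  have hP : PUp G (cutP π i δ) (b - δ) :=
    cut_PUp_nocp (by omega) hij' (by omega) hnc h2
  rcases hside with hs | hs
  · -- j ≤ a
    refine ⟨cutP π i δ, a - δ, b - δ, cut_isPath hij' h1, hP, by omega, ?_, ?_, ?_, rfl⟩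
    · rw [cut_eval_ge (by omega : i ≤ a - δ), cut_eval_ge (by omega : i ≤ b - δ),
        show a - δ + δ = a by omega, show b - δ + δ = b by omega]
      exact h4
    · rw [cut_eval_ge (by omega : i ≤ a - δ), show a - δ + δ = a by omega]
      exact h5
    · intro l hl1 hl2
      rw [cut_eval_ge (by omega : i ≤ l), cut_eval_ge (by omega : i ≤ a - δ),
        show a - δ + δ = a by omega]
      exact h6 (l + δ) (by omega) (by omega)
  · -- a ≤ i
    have hab : a < b - δ := by omega
    refine ⟨cutP π i δ, a, b - δ, cut_isPath hij' h1, hP, hab, ?_, ?_, ?_, rfl⟩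
    · rw [cut_eval_le hij' hs, cut_eval_ge (by omega : i ≤ b - δ),
        show b - δ + δ = b by omega]
      exact h4
    · rw [cut_eval_le hij' hs]
      exact h5
    · intro l hl1 hl2
      rw [cut_eval_le hij' hs]
      rcases Nat.lt_or_ge l i with h' | h'
      · rw [cut_eval_le hij' (by omega)]
        exact h6 l hl1 (by omega)
      · rw [cut_eval_ge h']
        exact h6 (l + δ) (by omega) (by omega)

/-- Shorten an over-long block located before `a`. -/
lemma redA_splice {a b c c' : ℕ} (h1 : G.IsPath π) (h2 : PUp G π b) (h3 : a < b)
    (h4 : π a = π b) (h5 : π a ∈ G.F)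
    (h6 : ∀ i, a ≤ i → i ≤ b → (G.lab (π i) ↔ G.lab (π a)))
    (hblock : G.SuccessiveCP π c c') (hca : c' ≤ a)
    (hlong : 4 * Fintype.card V + 4 < c' - c) :
    ∃ k', k' < b ∧ WitA G k' := by
  obtain ⟨g, K, hg1, hg2, hg3, hg4, hg5, _, hg7⟩ := blockShorten c le_rfl
    (by omega) hblock.1 h1.2 (block_label hblock) (h2 c c' hblock (by omega))
  set δ := (c' - c) - (K + 1) with hδ
  have hδpos : 0 < δ := by omega
  have hc' : c' = c + K + 1 + δ := by omega
  have hgK : g K = π (c + K + δ) := by rw [hg3, show c' - 1 = c + K + δ by omega]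
  refine ⟨b - δ, by omega, spl π c g K δ, a - δ, b - δ, spl_isPath hg2 hgK hg1 h1, ?_,
    by omega, ?_, ?_, ?_, rfl⟩
  · exact spl_PUp hg2 hgK hδpos hg5 (by rwa [← hc']) hg7 (by omega) h2
  · rw [spl_eval_ge hgK (by omega : c + K + 1 ≤ a - δ),
      spl_eval_ge hgK (by omega : c + K + 1 ≤ b - δ),
      show a - δ + δ = a by omega, show b - δ + δ = b by omega]
    exact h4
  · rw [spl_eval_ge hgK (by omega : c + K + 1 ≤ a - δ), show a - δ + δ = a by omega]
    exact h5
  · intro l hl1 hl2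
    rw [spl_eval_ge hgK (by omega : c + K + 1 ≤ l),
      spl_eval_ge hgK (by omega : c + K + 1 ≤ a - δ), show a - δ + δ = a by omega]
    exact h6 (l + δ) (by omega) (by omega)

end Reductions

section ReductionsB

variable {π : ℕ → V}

/-- Cut between two equal-vertex changepoints, avoiding the loop anchor `m`,
the loop end `mm` and the fair visit `f`. -/
lemma redB_cut {m mm f c c' : ℕ} (h1 : G.IsPath π) (h2 : PUp G π mm)
    (h3 : G.Changepoint π m) (h4 : G.Changepoint π mm) (h5 : m < mm) (h6 : π m = π mm)
    (h7 : m ≤ f) (h8 : f < mm) (h9 : π f ∈ G.F)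
    (hc : G.Changepoint π c) (hc' : G.Changepoint π c') (hlt : c < c') (hcb : c' ≤ mm)
    (hee : π c = π c') (hmside : c' ≤ m ∨ m ≤ c) (hfside : f < c ∨ c' ≤ f) :
    WitB G (mm - (c' - c)) := by
  set δ := c' - c with hδ
  have hij : π c = π (c + δ) := by rwa [show c + δ = c' by omega]
  have hP : PUp G (cutP π c δ) (mm - δ) :=
    cut_PUp_cp (by omega) hij hc (by rwa [show c + δ = c' by omega]) (by omega) h2
  have hcpshift : ∀ x, G.Changepoint π x → c' ≤ x → G.Changepoint (cutP π c δ) (x - δ) := by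
    intro x hx hx'
    rcases Nat.eq_or_lt_of_le (show c ≤ x - δ by omega) with h' | h'
    · rw [← h']; exact (cut_cp_le hij le_rfl).mpr hc
    · rw [cut_cp_gt hij h', show x - δ + δ = x by omega]; exact hx
  have hevshift : ∀ x, c' ≤ x → cutP π c δ (x - δ) = π x := by
    intro x hx
    rw [cut_eval_ge (by omega : c ≤ x - δ), show x - δ + δ = x by omega]
  have hmc : m ≤ c ∨ c' ≤ m := hmside.symm
  set m' := if c' ≤ m then m - δ else m with hm'
  set f' := if c' ≤ f then f - δ else f with hf'
  have hm'cp : G.Changepoint (cutP π c δ) m' := by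
    by_cases hcm : c' ≤ m
    · rw [hm', if_pos hcm]; exact hcpshift m h3 hcm
    · rw [hm', if_neg hcm]
      exact (cut_cp_le hij (by rcases hmc with h' | h' <;> omega)).mpr h3
  have hm'val : cutP π c δ m' = π m := by
    by_cases hcm : c' ≤ m
    · rw [hm', if_pos hcm]; exact hevshift m hcm
    · rw [hm', if_neg hcm]
      exact cut_eval_le hij (by rcases hmc with h' | h' <;> omega)
  refine ⟨cutP π c δ, m', mm - δ, f', cut_isPath hij h1, hP, hm'cp,
    hcpshift mm h4 (by omega), ?_, ?_, ?_, ?_, ?_, rfl⟩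
  · rw [hm']; split_ifs <;> omega
  · rw [hm'val, hevshift mm (by omega)]
    exact h6
  · rcases hfside with h' | h' <;> rcases hmc with h'' | h'' <;> rw [hm', hf'] <;>
      split_ifs <;> omega
  · rcases hfside with h' | h' <;> rw [hf'] <;> split_ifs <;> omega
  · by_cases hcf : c' ≤ f
    · rw [hf', if_pos hcf, hevshift f hcf]; exact h9
    · have hfc : f < c := hfside.resolve_right hcf
      rw [hf', if_neg hcf, cut_eval_le hij (by omega)]; exact h9

/-- Replace the loop by an inner loop containing the fair visit. -/
lemma redB_newloop {m mm f c c' : ℕ} (h1 : G.IsPath π) (h2 : PUp G π mm)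
    (h9 : π f ∈ G.F)
    (hc : G.Changepoint π c) (hc' : G.Changepoint π c') (hlt : c < c') (hcb : c' ≤ mm)
    (hee : π c = π c') (hf1 : c ≤ f) (hf2 : f < c') :
    WitB G c' :=
  ⟨π, c, c', f, h1, PUp_mono h2 hcb, hc, hc', hlt, hee, hf1, hf2, h9, rfl⟩

/-- Shorten an over-long block. -/
lemma redB_splice {m mm f c c' : ℕ} (h1 : G.IsPath π) (h2 : PUp G π mm)
    (h3 : G.Changepoint π m) (h4 : G.Changepoint π mm) (h5 : m < mm) (h6 : π m = π mm)
    (h7 : m ≤ f) (h8 : f < mm) (h9 : π f ∈ G.F)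
    (hblock : G.SuccessiveCP π c c') (hcb : c' ≤ mm)
    (hlong : 4 * Fintype.card V + 4 < c' - c) :
    ∃ k', k' < mm ∧ WitB G k' := by
  set w := if c ≤ f ∧ f < c' then f else c with hw
  have hw1 : c ≤ w := by rw [hw]; split <;> omega
  have hw2 : w ≤ c' - 1 := by rw [hw]; split <;> omega
  obtain ⟨g, K, hg1, hg2, hg3, hg4, hg5, hg6, hg7⟩ := blockShorten w hw1 hw2
    hblock.1 h1.2 (block_label hblock) (h2 c c' hblock hcb)
  set δ := (c' - c) - (K + 1) with hδ
  have hδpos : 0 < δ := by omega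
  have hc'eq : c' = c + K + 1 + δ := by omega
  have hgK : g K = π (c + K + δ) := by rw [hg3, show c' - 1 = c + K + δ by omega]
  have hP : PUp G (spl π c g K δ) (mm - δ) :=
    spl_PUp hg2 hgK hδpos hg5 (by rwa [← hc'eq]) hg7 (by omega) h2
  -- changepoint / value transfer above the block
  have hcpshift : ∀ x, G.Changepoint π x → c' ≤ x →
      G.Changepoint (spl π c g K δ) (x - δ) := by
    intro x hx hx'
    rcases Nat.eq_or_lt_of_le (show c + K + 1 ≤ x - δ by omega) with h' | h'
    · rw [← h']
      refine (spl_cp_end hgK).mpr ?_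
      rwa [show c + K + 1 + δ = x by omega]
    · rw [spl_cp_gt hgK h', show x - δ + δ = x by omega]; exact hx
  have hevshift : ∀ x, c' ≤ x → spl π c g K δ (x - δ) = π x := by
    intro x hx
    rw [spl_eval_ge hgK (by omega : c + K + 1 ≤ x - δ), show x - δ + δ = x by omega]
  -- `m` is not interior to the block
  have hmside : m ≤ c ∨ c' ≤ m := by
    by_contra h'
    push_neg at h'
    exact hblock.2.2.2 m h'.1 (by omega) h3
  set m' := if c' ≤ m then m - δ else m with hm'
  have hm'cp : G.Changepoint (spl π c g K δ) m' := by
    by_cases hcm : c' ≤ m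
    · rw [hm', if_pos hcm]; exact hcpshift m h3 hcm
    · rw [hm', if_neg hcm]
      exact (spl_cp_le hg2 (by rcases hmside with h' | h' <;> omega)).mpr h3
  have hm'val : spl π c g K δ m' = π m := by
    by_cases hcm : c' ≤ m
    · rw [hm', if_pos hcm]; exact hevshift m hcm
    · rw [hm', if_neg hcm]
      exact spl_eval_le hg2 (by rcases hmside with h' | h' <;> omega)
  -- new fair position
  obtain ⟨p, hp1, hp2⟩ := hg6
  have hfcases : (c ≤ f ∧ f < c') ∨ f < c ∨ c' ≤ f := by omega
  set f' := if c ≤ f ∧ f < c' then c + p else if c' ≤ f then f - δ else f with hf'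
  have hf'val : spl π c g K δ f' = π f := by
    by_cases hin : c ≤ f ∧ f < c'
    · rw [hf', if_pos hin, spl_eval_mid (by omega) (by omega),
        show c + p - c = p by omega, hp2, hw, if_pos hin]
    · by_cases hcf : c' ≤ f
      · rw [hf', if_neg hin, if_pos hcf]; exact hevshift f hcf
      · rw [hf', if_neg hin, if_neg hcf]; exact spl_eval_le hg2 (by omega)
  refine ⟨mm - δ, by omega, spl π c g K δ, m', mm - δ, f',
    spl_isPath hg2 hgK hg1 h1, hP, hm'cp, hcpshift mm h4 (by omega), ?_, ?_, ?_, ?_, ?_, rfl⟩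
  · rw [hm']; split_ifs <;> omega
  · rw [hm'val, hevshift mm (by omega)]; exact h6
  · rcases hfcases with hf | hf | hf <;> rcases hmside with hm | hm <;> rw [hm', hf'] <;>
      split_ifs <;> omega
  · rcases hfcases with hf | hf | hf <;> rw [hf'] <;> split_ifs <;> omega
  · rw [hf'val]; exact h9

end ReductionsB

/-! ### Building the ultimately periodic path -/

def loopify (π : ℕ → V) (a t : ℕ) : ℕ → V :=
  fun n => if n < a then π n else π (a + (n - a) % t)

section Loopify

variable {π : ℕ → V} {a t : ℕ}

lemma loopify_lt {n : ℕ} (hn : n < a) : loopify π a t n = π n := if_pos hn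

lemma loopify_ge {n : ℕ} (hn : a ≤ n) : loopify π a t n = π (a + (n - a) % t) :=
  if_neg (Nat.not_lt.mpr hn)

lemma loopify_per (hn : ∀ n, a ≤ n → loopify π a t (n + t) = loopify π a t n) : True :=
  trivial

lemma loopify_period {n : ℕ} (hn : a ≤ n) :
    loopify π a t (n + t) = loopify π a t n := by
  rw [loopify_ge (by omega), loopify_ge hn, show n + t - a = n - a + t by omega,
    Nat.add_mod_right]

lemma loopify_eqpi (ht : 0 < t) (hcl : π a = π (a + t)) {n : ℕ} (hn : n ≤ a + t) :
    loopify π a t n = π n := by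
  rcases Nat.lt_or_ge n a with h | h
  · exact loopify_lt h
  · rw [loopify_ge h]
    rcases Nat.lt_or_ge n (a + t) with h' | h'
    · rw [Nat.mod_eq_of_lt (by omega), show a + (n - a) = n by omega]
    · have hn' : n = a + t := by omega
      subst hn'
      rw [show a + t - a = t by omega, Nat.mod_self, Nat.add_zero]
      exact hcl

lemma loopify_isPath (ht : 0 < t) (hcl : π a = π (a + t)) (h : G.IsPath π) :
    G.IsPath (loopify π a t) := by
  constructor
  · rw [loopify_eqpi ht hcl (by omega)]; exact h.1
  · intro n
    rcases Nat.lt_or_ge n a with hn | hn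
    · rw [loopify_lt hn, loopify_eqpi ht hcl (by omega)]
      exact h.2 n
    · rw [loopify_ge hn, loopify_ge (by omega)]
      have hrt : (n - a) % t < t := Nat.mod_lt _ ht
      have hstep : (n + 1 - a) % t = ((n - a) % t + 1) % t := by
        rcases Nat.lt_or_ge 1 t with h1 | h1
        · rw [show n + 1 - a = (n - a) + 1 by omega, Nat.add_mod,
            Nat.mod_eq_of_lt h1]
        · have ht1 : t = 1 := by omega
          subst ht1
          simp [Nat.mod_one]
      rcases Nat.lt_or_ge ((n - a) % t + 1) t with h' | h'
      · rw [hstep, Nat.mod_eq_of_lt h', show a + ((n - a) % t + 1) = a + (n - a) % t + 1 by omega]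
        exact h.2 (a + (n - a) % t)
      · have hrt' : (n - a) % t + 1 = t := by omega
        rw [hstep, hrt', Nat.mod_self, Nat.add_zero]
        have h2 := h.2 (a + (n - a) % t)
        rwa [show a + (n - a) % t + 1 = a + t by omega, ← hcl] at h2

lemma loopify_fair (ht : 0 < t) {q : ℕ} (hq : a ≤ q) (hq2 : q < a + t)
    (hF : π q ∈ G.F) : G.Fair (loopify π a t) := by
  have hmem : ∀ l : ℕ, loopify π a t (q + l * t) = π q := by
    intro l
    rw [loopify_ge (by omega), show q + l * t - a = (q - a) + t * l by rw [Nat.mul_comm t l]; omega,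
      Nat.add_mul_mod_self_left, Nat.mod_eq_of_lt (by omega),
      show a + (q - a) = q by omega]
  refine Set.infinite_of_injective_forall_mem
    (f := fun l : ℕ => q + l * t) ?_ ?_
  · intro x y hxy
    simp only at hxy
    have : x * t = y * t := by omega
    exact Nat.eq_of_mul_eq_mul_right ht this
  · intro l
    simp only [Set.mem_setOf_eq, hmem l]
    exact hF

end Loopify

/-- Construct the final path from a case-A witness. -/
lemma buildA {k : ℕ} (h : WitA G k) :
    ∃ σ, G.IsPath σ ∧ G.Fair σ ∧ G.Pumpable σ ∧
      ∃ s t, 0 < t ∧ s + t = k ∧ ∀ n, s ≤ n → σ (n + t) = σ n := by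
  obtain ⟨π, a, b, h1, h2, h3, h4, h5, h6, rfl⟩ := h
  set t := b - a with htdef
  have ht : 0 < t := by omega
  have hcl : π a = π (a + t) := by rwa [show a + t = b by omega]
  set σ := loopify π a t with hσ
  have hσeq : ∀ n, n ≤ b → σ n = π n := by
    intro n hn
    exact loopify_eqpi ht hcl (by omega)
  -- changepoints of σ are changepoints of π located ≤ a
  have hcple : ∀ l, l ≤ b → (G.Changepoint σ l ↔ G.Changepoint π l) := by
    intro l hl
    unfold CBG.Changepoint
    rw [hσeq l hl, hσeq (l - 1) (by omega)]
  have hnocp : ∀ l, a < l → ¬ G.Changepoint σ l := by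
    intro l hl
    rw [not_cp_iff (by omega)]
    have hv : ∀ x, a ≤ x → ∃ y, a ≤ y ∧ y ≤ b ∧ σ x = π y := by
      intro x hx
      rw [hσ, loopify_ge hx]
      exact ⟨a + (x - a) % t, by omega, by have := Nat.mod_lt (x - a) ht; omega, rfl⟩
    obtain ⟨y1, hy11, hy12, hy13⟩ := hv (l - 1) (by omega)
    obtain ⟨y2, hy21, hy22, hy23⟩ := hv l (by omega)
    rw [hy13, hy23]
    exact (h6 y1 hy11 hy12).trans (h6 y2 hy21 hy22).symm
  refine ⟨σ, loopify_isPath ht hcl h1, loopify_fair ht le_rfl (by omega) h5, ?_,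
    a, t, ht, by omega, fun n hn => loopify_period hn⟩
  intro m₁ m₂ hs
  obtain ⟨hlt, hc1, hc2, hbet⟩ := hs
  have hm₂ : m₂ ≤ a := by
    by_contra h'
    exact hnocp m₂ (by omega) hc2
  have hpair : G.SuccessiveCP π m₁ m₂ := by
    refine ⟨hlt, (hcple m₁ (by omega)).mp hc1, (hcple m₂ (by omega)).mp hc2, ?_⟩
    intro l hl1 hl2 hcl'
    exact hbet l hl1 hl2 ((hcple l (by omega)).mpr hcl')
  obtain ⟨i, j, hi1, hi2, hi3, hi4, hi5⟩ := h2 m₁ m₂ hpair (by omega)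
  refine ⟨i, j, hi1, hi2, hi3, ?_, ?_⟩
  · rw [hσeq i (by omega), hσeq j (by omega)]; exact hi4
  · have := costW_congr G (f := σ) (g := π) (a := i) (b := j)
      (fun l hl1 hl2 => hσeq l (by omega))
    unfold costW at this
    rw [this]
    exact hi5

/-- Construct the final path from a case-B witness. -/
lemma buildB {k : ℕ} (h : WitB G k) :
    ∃ σ, G.IsPath σ ∧ G.Fair σ ∧ G.Pumpable σ ∧
      ∃ s t, 0 < t ∧ s + t = k ∧ ∀ n, s ≤ n → σ (n + t) = σ n := by
  obtain ⟨π, m, mm, f, h1, h2, h3, h4, h5, h6, h7, h8, h9, rfl⟩ := h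
  set t := mm - m with htdef
  have ht : 0 < t := by omega
  have hcl : π m = π (m + t) := by rwa [show m + t = mm by omega]
  set σ := loopify π m t with hσ
  have hσeq : ∀ n, n ≤ mm → σ n = π n := by
    intro n hn
    exact loopify_eqpi ht hcl (by omega)
  have hper : ∀ n, m ≤ n → σ (n + t) = σ n := fun n hn => loopify_period hn
  have hcple : ∀ l, l ≤ mm → (G.Changepoint σ l ↔ G.Changepoint π l) := by
    intro l hl
    unfold CBG.Changepoint
    rw [hσeq l hl, hσeq (l - 1) (by omega)]
  have hshift : ∀ l, m + 1 ≤ l → (G.Changepoint σ (l + t) ↔ G.Changepoint σ l) := by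
    intro l hl
    have e1 : σ (l + t) = σ l := hper l (by omega)
    have e2 : σ (l + t - 1) = σ (l - 1) := by
      rw [show l + t - 1 = (l - 1) + t by omega]
      exact hper (l - 1) (by omega)
    unfold CBG.Changepoint
    rw [e1, e2]
    constructor
    · rintro (h' | h')
      · omega
      · exact Or.inr h'
    · rintro (h' | h')
      · omega
      · exact Or.inr h'
  have hwrap : ∀ l, 1 ≤ l → G.Changepoint σ (m + l * t) := by
    intro l hl
    have htl : t ≤ l * t := Nat.le_mul_of_pos_left t hl
    have hval : σ (m + l * t) = π m := by
      rw [hσ, loopify_ge (by omega), show m + l * t - m = l * t by omega,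
        Nat.mul_mod_left, Nat.add_zero]
    have hval2 : σ (m + l * t - 1) = π (mm - 1) := by
      obtain ⟨l', rfl⟩ : ∃ l', l = l' + 1 := ⟨l - 1, by omega⟩
      have e : m + (l' + 1) * t - 1 - m = (t - 1) + t * l' := by
        rw [Nat.succ_mul, Nat.mul_comm t l']
        omega
      rw [hσ, loopify_ge (by omega), e, Nat.add_mul_mod_self_left,
        Nat.mod_eq_of_lt (by omega), show m + (t - 1) = mm - 1 by omega]
    refine Or.inr ?_
    rw [hval, hval2]
    rcases h4 with h' | h'
    · omega
    · rwa [← h6, show mm - 1 = mm - 1 by rfl] at h'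
  have main : ∀ m₂ : ℕ, ∀ m₁, G.SuccessiveCP σ m₁ m₂ →
      ∃ i j, m₁ ≤ i ∧ i < j ∧ j ≤ m₂ - 1 ∧ σ i = σ j ∧ 0 < costW G σ i j := by
    intro m₂
    induction m₂ using Nat.strong_induction_on with
    | _ m₂ ih =>
      intro m₁ hs
      obtain ⟨hlt, hc1, hc2, hbet⟩ := hs
      rcases le_or_gt m₂ mm with hm2 | hm2
      · -- direct transfer
        have hpair : G.SuccessiveCP π m₁ m₂ := by
          refine ⟨hlt, (hcple m₁ (by omega)).mp hc1, (hcple m₂ (by omega)).mp hc2, ?_⟩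
          intro l hl1 hl2 hcl'
          exact hbet l hl1 hl2 ((hcple l (by omega)).mpr hcl')
        obtain ⟨i, j, hi1, hi2, hi3, hi4, hi5⟩ := h2 m₁ m₂ hpair hm2
        refine ⟨i, j, hi1, hi2, hi3, ?_, ?_⟩
        · rw [hσeq i (by omega), hσeq j (by omega)]; exact hi4
        · rw [costW_congr G (f := σ) (g := π) (fun l hl1 hl2 => hσeq l (by omega))]
          exact hi5
      · -- shift down by one period
        have hx := Nat.div_add_mod (m₂ - m) t
        rw [Nat.mul_comm] at hx
        have hmod : (m₂ - m) % t < t := Nat.mod_lt _ ht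
        set l := (m₂ - m) / t with hldef
        have hl1 : 1 ≤ l := (Nat.one_le_div_iff ht).mpr (by omega)
        have htl : t ≤ l * t := Nat.le_mul_of_pos_left t hl1
        have hwcp : G.Changepoint σ (m + l * t) := hwrap l hl1
        have hwle : m + l * t ≤ m₂ := by omega
        have hm1t : m + t ≤ m₁ := by
          rcases Nat.lt_or_ge (m + l * t) m₂ with hcase | hcase
          · have hnot : ¬ (m₁ < m + l * t) := fun h' => hbet _ h' hcase hwcp
            omega
          · have hweq : m + l * t = m₂ := by omega
            have hl2 : 2 ≤ l := by
              by_contra h'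
              have hl' : l = 1 := by omega
              rw [hl', Nat.one_mul] at hweq
              omega
            have hw'cp : G.Changepoint σ (m + (l - 1) * t) := hwrap (l - 1) (by omega)
            have hsub : (l - 1) * t = l * t - t := Nat.sub_one_mul l t ▸ rfl
            have htl' : t ≤ (l - 1) * t := Nat.le_mul_of_pos_left t (by omega)
            have hw'lt : m + (l - 1) * t < m₂ := by omega
            have hnot : ¬ (m₁ < m + (l - 1) * t) := fun h' => hbet _ h' hw'lt hw'cp
            omega
        have hc2' : G.Changepoint σ (m₂ - t) := by
          refine (hshift (m₂ - t) (by omega)).mp ?_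
          rwa [show m₂ - t + t = m₂ by omega]
        have hc1' : G.Changepoint σ (m₁ - t) := by
          rcases Nat.eq_or_lt_of_le hm1t with h' | h'
          · rw [← h', show m + t - t = m by omega]
            exact (hcple m (by omega)).mpr h3
          · refine (hshift (m₁ - t) (by omega)).mp ?_
            rwa [show m₁ - t + t = m₁ by omega]
        have hpair : G.SuccessiveCP σ (m₁ - t) (m₂ - t) := by
          refine ⟨by omega, hc1', hc2', ?_⟩
          intro x hx1 hx2 hcx
          have hcx' : G.Changepoint σ (x + t) := (hshift x (by omega)).mpr hcx
          exact hbet (x + t) (by omega) (by omega) hcx'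
        obtain ⟨i, j, hi1, hi2, hi3, hi4, hi5⟩ := ih (m₂ - t) (by omega) (m₁ - t) hpair
        refine ⟨i + t, j + t, by omega, by omega, by omega, ?_, ?_⟩
        · rw [hper i (by omega), hper j (by omega)]; exact hi4
        · have hcw := costW_shift G (f := σ) (g := σ) (a := i) (b := j) (t := t)
            (fun x hx1 hx2 => (hper x (by omega)).symm)
          rw [← hcw]
          exact hi5
  refine ⟨σ, loopify_isPath ht hcl h1, loopify_fair ht h7 (by omega) h9, ?_,
    m, t, ht, by omega, fun n hn => loopify_period hn⟩
  intro m₁ m₂ hs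
  exact main m₂ m₁ hs

/-! ### Extraction of a witness from a pumpable fair path -/

lemma pigeonV (π : ℕ → V) {S : Set ℕ} (hS : S.Infinite) :
    ∃ v : V, {n | n ∈ S ∧ π n = v}.Infinite := by
  by_contra h'
  push_neg at h'
  have hfin : ∀ v : V, {n | n ∈ S ∧ π n = v}.Finite := by
    intro v
    rcases Set.finite_or_infinite {n | n ∈ S ∧ π n = v} with h | h
    · exact h
    · exact absurd (h' v) h
  have hsub : S ⊆ ⋃ v : V, {n | n ∈ S ∧ π n = v} := by
    intro x hx
    exact Set.mem_iUnion.mpr ⟨π x, hx, rfl⟩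
  exact hS (Set.Finite.subset (Set.finite_iUnion hfin) hsub)

lemma exists_wit {π : ℕ → V} (h1 : G.IsPath π) (h2 : G.Fair π) (h3 : G.Pumpable π) :
    (∃ k, WitA G k) ∨ (∃ k, WitB G k) := by
  by_cases hfin : {n | G.Changepoint π n}.Finite
  · -- finitely many changepoints : case A
    left
    have hne : 0 ∈ hfin.toFinset := by
      rw [Set.Finite.mem_toFinset]
      exact cp_zero π
    set M := hfin.toFinset.max' ⟨0, hne⟩ with hM
    have hMcp : G.Changepoint π M := by
      have := hfin.toFinset.max'_mem ⟨0, hne⟩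
      rwa [Set.Finite.mem_toFinset] at this
    have hMmax : ∀ l, G.Changepoint π l → l ≤ M := by
      intro l hl
      exact hfin.toFinset.le_max' l (by rwa [Set.Finite.mem_toFinset])
    have hconst : ∀ i, M ≤ i → (G.lab (π i) ↔ G.lab (π M)) := by
      intro i hi
      induction i, hi using Nat.le_induction with
      | base => exact Iff.rfl
      | succ n hn ih =>
        have hncp : ¬ G.Changepoint π (n + 1) := by
          intro h'
          have := hMmax _ h'
          omega
        rw [not_cp_iff (by omega)] at hncp
        simp only [Nat.add_sub_cancel] at hncp
        exact hncp.symm.trans ih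
    obtain ⟨v, hv⟩ := pigeonV π h2
    obtain ⟨a, ha, haM⟩ := hv.exists_gt M
    obtain ⟨b, hb, hab⟩ := hv.exists_gt a
    refine ⟨b, π, a, b, h1, pumpable_PUp G h3 b, hab, ?_, ha.1, ?_, rfl⟩
    · rw [ha.2, hb.2]
    · intro i hi1 hi2
      exact (hconst i (by omega)).trans (hconst a (by omega)).symm
  · -- infinitely many changepoints : case B
    right
    rw [← Set.not_infinite, not_not] at hfin
    obtain ⟨v, hv⟩ := pigeonV π hfin
    obtain ⟨m, hm⟩ := hv.nonempty
    obtain ⟨f, hf, hmf⟩ := h2.exists_gt m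
    obtain ⟨mm, hmm, hfmm⟩ := hv.exists_gt f
    refine ⟨mm, π, m, mm, f, h1, pumpable_PUp G h3 mm, hm.1, hmm.1, by omega, ?_,
      by omega, hfmm, hf, rfl⟩
    rw [hm.2, hmm.2]

/-! ### Minimal witnesses are small -/

lemma boundA (hex : ∃ k, WitA G k) :
    ∃ k, WitA G k ∧ k ≤ 100 * (Fintype.card V) ^ 2 := by
  set n := Fintype.card V with hn
  have hk₀ := Nat.find_spec hex
  have hmin : ∀ k', k' < Nat.find hex → ¬ WitA G k' := fun k' h' => Nat.find_min hex h'
  refine ⟨Nat.find hex, hk₀, ?_⟩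
  obtain ⟨π, a, b, h1, h2, h3, h4, h5, h6, hbk⟩ := hk₀
  have hnpos : 0 < n := by rw [hn]; exact Fintype.card_pos_iff.mpr ⟨π 0⟩
  -- no changepoints in (a, b]
  have hnc : ∀ l, a < l → l ≤ b → ¬ G.Changepoint π l := by
    intro l hl1 hl2
    rw [not_cp_iff (by omega)]
    exact (h6 (l - 1) (by omega) (by omega)).trans (h6 l (by omega) hl2).symm
  -- Feature absences
  have hAcut : ∀ c c', G.Changepoint π c → G.Changepoint π c' → c < c' → c' ≤ a →
      π c ≠ π c' := by
    intro c c' hc hc' hlt hca hee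
    exact hmin (b - (c' - c)) (by omega)
      (redA_cut h1 h2 h3 h4 h5 h6 hc hc' hlt hca hee)
  have hgap : ∀ c c', G.SuccessiveCP π c c' → c' ≤ a → c' - c ≤ 4 * n + 4 := by
    intro c c' hs hca
    by_contra h'
    obtain ⟨k', hk1, hk2⟩ := redA_splice h1 h2 h3 h4 h5 h6 hs hca (by omega)
    exact hmin k' (by omega) hk2
  have hAnocp : ∀ i j, i < j → j ≤ b → (j ≤ a ∨ a ≤ i) → ¬ (i = a ∧ j = b) →
      (∀ l, i < l → l ≤ b → ¬ G.Changepoint π l) → π i ≠ π j := by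
    intro i j hij hjb hside hne hncl hee
    exact hmin (b - (j - i)) (by omega)
      (redA_cutnocp h1 h2 h3 h4 h5 h6 hij hjb hside hne hee hncl)
  -- the last changepoint before `a`
  set T := (Finset.range (a + 1)).filter (fun l => G.Changepoint π l) with hT
  have h0T : 0 ∈ T := by
    rw [hT, Finset.mem_filter, Finset.mem_range]
    exact ⟨by omega, cp_zero π⟩
  set M := T.max' ⟨0, h0T⟩ with hM
  have hMmem : M ∈ T := T.max'_mem ⟨0, h0T⟩
  have hMcp : G.Changepoint π M := by
    have := hMmem
    rw [hT, Finset.mem_filter] at this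
    exact this.2
  have hMa : M ≤ a := by
    have := hMmem
    rw [hT, Finset.mem_filter, Finset.mem_range] at this
    omega
  have hMmax : ∀ l, G.Changepoint π l → l ≤ a → l ≤ M := by
    intro l hl hla
    exact T.le_max' l (by rw [hT, Finset.mem_filter, Finset.mem_range]; exact ⟨by omega, hl⟩)
  -- all changepoints ≤ b are ≤ M
  have hallcp : ∀ l, G.Changepoint π l → l ≤ b → l ≤ M := by
    intro l hl hlb
    rcases le_or_gt l a with h' | h'
    · exact hMmax l hl h'
    · exact absurd hl (hnc l h' hlb)
  -- card T ≤ n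
  have hcardT : T.card ≤ n := by
    refine inj_card π ?_
    intro x hx y hy hxy
    rw [hT, Finset.mem_filter, Finset.mem_range] at hx hy
    by_contra h'
    rcases Nat.lt_or_ge x y with h'' | h''
    · exact hAcut x y hx.2 hy.2 h'' (by omega) hxy
    · exact hAcut y x hy.2 hx.2 (by omega) (by omega) hxy.symm
  -- climb: M is small
  have hclimb := climb hgap M hMcp hMa
  have hsubM : (Finset.range M).filter (fun l => G.Changepoint π l) ⊆ T.erase M := by
    intro x hx
    rw [Finset.mem_filter, Finset.mem_range] at hx
    rw [Finset.mem_erase, hT, Finset.mem_filter, Finset.mem_range]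
    exact ⟨by omega, by omega, hx.2⟩
  have hcardM : ((Finset.range M).filter (fun l => G.Changepoint π l)).card ≤ n - 1 := by
    have h1' := Finset.card_le_card hsubM
    have h2' := Finset.card_erase_of_mem hMmem
    omega
  have hMle : M ≤ (n - 1) * (4 * n + 4) :=
    le_trans hclimb (Nat.mul_le_mul_right _ hcardM)
  -- a - M ≤ n - 1 : injectivity on [M, a]
  have hinj2 : (Finset.Icc M a).card ≤ n := by
    refine inj_card π ?_
    intro x hx y hy hxy
    rw [Finset.mem_Icc] at hx hy
    by_contra h'
    have key : ∀ i j, M ≤ i → i < j → j ≤ a → π i ≠ π j := by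
      intro i j hMi hij hja
      refine hAnocp i j hij (by omega) (Or.inl hja) (by omega) ?_
      intro l hl1 hl2 hcl
      have := hallcp l hcl hl2
      omega
    rcases Nat.lt_or_ge x y with h'' | h''
    · exact key x y hx.1 h'' hy.2 hxy
    · exact key y x hy.1 (by omega) hx.2 hxy.symm
  -- b - a ≤ n : injectivity on [a, b-1]
  have hinj3 : (Finset.Icc a (b - 1)).card ≤ n := by
    refine inj_card π ?_
    intro x hx y hy hxy
    rw [Finset.mem_Icc] at hx hy
    by_contra h'
    have key : ∀ i j, a ≤ i → i < j → j ≤ b - 1 → π i ≠ π j := by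
      intro i j hai hij hjb
      refine hAnocp i j hij (by omega) (Or.inr hai) (by omega) ?_
      intro l hl1 hl2 hcl
      have := hallcp l hcl hl2
      omega
    rcases Nat.lt_or_ge x y with h'' | h''
    · exact key x y hx.1 h'' hy.2 hxy
    · exact key y x hy.1 (by omega) hx.2 hxy.symm
  rw [Nat.card_Icc] at hinj2 hinj3
  -- combine
  have hfin : b ≤ (n - 1) * (4 * n + 4) + 2 * n := by omega
  have hpoly : (n - 1) * (4 * n + 4) + 2 * n ≤ 100 * n ^ 2 := by
    have h' : (n - 1) * (4 * n + 4) ≤ n * (4 * n + 4) :=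
      Nat.mul_le_mul_right _ (by omega)
    have h'' : n * (4 * n + 4) + 2 * n ≤ 100 * n ^ 2 := by nlinarith
    omega
  omega

lemma boundB (hex : ∃ k, WitB G k) :
    ∃ k, WitB G k ∧ k ≤ 100 * (Fintype.card V) ^ 2 := by
  set n := Fintype.card V with hn
  have hk₀ := Nat.find_spec hex
  have hmin : ∀ k', k' < Nat.find hex → ¬ WitB G k' := fun k' h' => Nat.find_min hex h'
  refine ⟨Nat.find hex, hk₀, ?_⟩
  obtain ⟨π, m, mm, f, h1, h2, h3, h4, h5, h6, h7, h8, h9, hbk⟩ := hk₀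
  have hnpos : 0 < n := by rw [hn]; exact Fintype.card_pos_iff.mpr ⟨π 0⟩
  -- replace m by the largest changepoint ≤ f with the loop vertex
  set Fm := (Finset.range (f + 1)).filter
    (fun c => G.Changepoint π c ∧ π c = π mm) with hFm
  have hmFm : m ∈ Fm := by
    rw [hFm, Finset.mem_filter, Finset.mem_range]
    exact ⟨by omega, h3, h6⟩
  set M := Fm.max' ⟨m, hmFm⟩ with hM
  have hMmem : M ∈ Fm := Fm.max'_mem ⟨m, hmFm⟩
  have hMprops : M ≤ f ∧ G.Changepoint π M ∧ π M = π mm := by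
    have := hMmem
    rw [hFm, Finset.mem_filter, Finset.mem_range] at this
    exact ⟨by omega, this.2.1, this.2.2⟩
  obtain ⟨hMf, hMcp, hMv⟩ := hMprops
  have hMmax : ∀ c, G.Changepoint π c → π c = π mm → c ≤ f → c ≤ M := by
    intro c hc hcv hcf
    exact Fm.le_max' c (by rw [hFm, Finset.mem_filter, Finset.mem_range]; exact ⟨by omega, hc, hcv⟩)
  have hMmm : M < mm := by omega
  -- feature absences
  have hB1 : ∀ c c', G.Changepoint π c → G.Changepoint π c' → c < c' → c' ≤ M →
      π c ≠ π c' := by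
    intro c c' hc hc' hlt hca hee
    exact hmin (mm - (c' - c)) (by omega)
      (redB_cut h1 h2 hMcp h4 hMmm hMv hMf h8 h9 hc hc' hlt (by omega) hee
        (Or.inl hca) (Or.inr (by omega)))
  have hB2 : ∀ c c', G.Changepoint π c → G.Changepoint π c' → M ≤ c → c < c' →
      c' ≤ mm → ¬ (c = M ∧ c' = mm) → π c ≠ π c' := by
    intro c c' hc hc' hMc hlt hcb hne hee
    rcases Nat.lt_or_ge f c with hfc | hfc
    · -- f < c : cut
      exact hmin (mm - (c' - c)) (by omega)
        (redB_cut h1 h2 hMcp h4 hMmm hMv hMf h8 h9 hc hc' hlt hcb hee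
          (Or.inr (by omega)) (Or.inl hfc))
    rcases Nat.lt_or_ge f c' with hfc' | hfc'
    · -- c ≤ f < c' : the inner loop
      rcases Nat.lt_or_ge c' mm with hcmm | hcmm
      · exact hmin c' (by omega)
          (redB_newloop (m := M) h1 h2 h9 hc hc' hlt hcb hee hfc (by omega))
      · -- c' = mm : contradicts the maximality of M
        have hc'mm : c' = mm := by omega
        subst hc'mm
        have := hMmax c hc hee hfc
        exact hne ⟨by omega, rfl⟩
    · -- c' ≤ f : cut
      exact hmin (mm - (c' - c)) (by omega)
        (redB_cut h1 h2 hMcp h4 hMmm hMv hMf h8 h9 hc hc' hlt hcb hee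
          (Or.inr (by omega)) (Or.inr hfc'))
  have hgap : ∀ c c', G.SuccessiveCP π c c' → c' ≤ mm → c' - c ≤ 4 * n + 4 := by
    intro c c' hs hcb
    by_contra h'
    obtain ⟨k', hk1, hk2⟩ := redB_splice h1 h2 hMcp h4 hMmm hMv hMf h8 h9 hs hcb (by omega)
    exact hmin k' (by omega) hk2
  -- counting changepoints below mm
  set T1 := (Finset.range (M + 1)).filter (fun l => G.Changepoint π l) with hT1
  set T2 := (Finset.Icc (M + 1) mm).filter (fun l => G.Changepoint π l) with hT2
  have hcardT1 : T1.card ≤ n := by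
    refine inj_card π ?_
    intro x hx y hy hxy
    rw [hT1, Finset.mem_filter, Finset.mem_range] at hx hy
    by_contra h'
    rcases Nat.lt_or_ge x y with h'' | h''
    · exact hB1 x y hx.2 hy.2 h'' (by omega) hxy
    · exact hB1 y x hy.2 hx.2 (by omega) (by omega) hxy.symm
  have hcardT2 : T2.card ≤ n := by
    refine inj_card π ?_
    intro x hx y hy hxy
    rw [hT2, Finset.mem_filter, Finset.mem_Icc] at hx hy
    by_contra h'
    rcases Nat.lt_or_ge x y with h'' | h''
    · exact hB2 x y hx.2 hy.2 (by omega) h'' (by omega) (by omega) hxy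
    · exact hB2 y x hy.2 hx.2 (by omega) (by omega) (by omega) (by omega) hxy.symm
  have hsub : (Finset.range mm).filter (fun l => G.Changepoint π l) ⊆ T1 ∪ T2 := by
    intro x hx
    rw [Finset.mem_filter, Finset.mem_range] at hx
    rw [Finset.mem_union, hT1, hT2, Finset.mem_filter, Finset.mem_filter,
      Finset.mem_range, Finset.mem_Icc]
    rcases Nat.lt_or_ge x (M + 1) with h' | h'
    · exact Or.inl ⟨h', hx.2⟩
    · exact Or.inr ⟨⟨h', by omega⟩, hx.2⟩
  have hcard : ((Finset.range mm).filter (fun l => G.Changepoint π l)).card ≤ 2 * n := by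
    have h' := Finset.card_le_card hsub
    have h'' := Finset.card_union_le T1 T2
    omega
  have hclimb := climb hgap mm h4 le_rfl
  have hfin : mm ≤ 2 * n * (4 * n + 4) :=
    le_trans hclimb (Nat.mul_le_mul_right _ hcard)
  have hpoly : 2 * n * (4 * n + 4) ≤ 100 * n ^ 2 := by nlinarith
  omega

end CBGAux

/-- Pumping lemma for colored Büchi graphs with costs: if there is an initial
pumpable fair path, there is one of the ultimately periodic form π₀π₁^ω with
|π₀π₁| ∈ O(n²), where n is the number of vertices. -/
theorem pumpable_nonemptiness_small_witness :
    ∃ C : ℕ, ∀ (V : Type) [Fintype V] (G : CBG V),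
      (∃ π, G.IsPath π ∧ G.Fair π ∧ G.Pumpable π) →
      ∃ π, G.IsPath π ∧ G.Fair π ∧ G.Pumpable π ∧
        ∃ s t, 0 < t ∧ s + t ≤ C * (Fintype.card V) ^ 2 ∧
          ∀ n, s ≤ n → π (n + t) = π n := by
  refine ⟨100, ?_⟩
  intro V _ G hex
  obtain ⟨π, h1, h2, h3⟩ := hex
  rcases CBGAux.exists_wit h1 h2 h3 with hA | hB
  · obtain ⟨k, hwit, hk⟩ := CBGAux.boundA hA
    obtain ⟨σ, hp, hf, hpu, s, t, ht, hst, hper⟩ := CBGAux.buildA hwit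
    exact ⟨σ, hp, hf, hpu, s, t, ht, by omega, hper⟩
  · obtain ⟨k, hwit, hk⟩ := CBGAux.boundB hB
    obtain ⟨σ, hp, hf, hpu, s, t, ht, hst, hper⟩ := CBGAux.buildB hwit
    exact ⟨σ, hp, hf, hpu, s, t, ht, by omega, hper⟩
end

section
/- Every pumpable block can be pumped to arbitrarily high cost: if a finite path segment (block) in a finite edge-weighted directed graph contains a vertex repetition forming a cycle of non-zero cost, then for every bound B ∈ ℕ there is a finite path with the same first and last vertex, visiting only vertices of the original segment, whose total cost exceeds B, obtained by repeating the cycle sufficiently often. -/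
/-- Every pumpable block can be pumped to arbitrarily high cost: if a finite
path segment contains a vertex repetition forming a cycle of non-zero cost,
then for every bound B there is a finite path with the same first and last
vertex, visiting only vertices of the original segment, whose total cost
exceeds B. -/
theorem pump_block {V : Type} (E : V → V → Prop) (cst : V → V → ℕ)
    (m : ℕ) (v : ℕ → V) (hpath : ∀ k < m, E (v k) (v (k + 1)))
    (i j : ℕ) (hij : i < j) (hjm : j ≤ m) (hrep : v i = v j)
    (hcyc : 0 < ∑ k ∈ Finset.Ico i j, cst (v k) (v (k + 1))) :
    ∀ B : ℕ, ∃ (L : ℕ) (u : ℕ → V),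
      u 0 = v 0 ∧ u L = v m ∧
      (∀ k < L, E (u k) (u (k + 1))) ∧
      (∀ k ≤ L, ∃ t ≤ m, u k = v t) ∧
      B < ∑ k ∈ Finset.range L, cst (u k) (u (k + 1)) := by
  intro B
  set d := j - i with hd
  have hd0 : 0 < d := by omega
  set c := ∑ k ∈ Finset.Ico i j, cst (v k) (v (k + 1)) with hc
  set D := B * d with hD
  set L := m + D with hL
  set f : ℕ → ℕ := fun k =>
    if k < i + (D + d) then (if k ≤ i then k else i + (k - i) % d) else k - D
    with hf
  have hij' : i + d = j := by omega
  have hNL : i + (D + d) ≤ L := by omega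
  -- key lemma A
  have keyA : ∀ q r, q ≤ B → r < d →
      v (f (i + q * d + r)) = v (i + r) ∧
      v (f (i + q * d + r + 1)) = v (i + r + 1) := by
    intro q r hq hr
    have hqd : q * d + d ≤ D + d := by
      have : q * d ≤ B * d := Nat.mul_le_mul_right d hq
      omega
    have hlt : i + q * d + r < i + (D + d) := by omega
    have hmod : (q * d + r) % d = r := by
      rw [Nat.add_comm, Nat.add_mul_mod_self_right, Nat.mod_eq_of_lt hr]
    constructor
    · simp only [hf]
      rw [if_pos hlt]
      by_cases h1 : i + q * d + r ≤ i
      · have hq0 : q * d = 0 ∧ r = 0 := by omega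
        rw [if_pos h1]
        congr 1
        omega
      · rw [if_neg h1]
        congr 1
        have : i + q * d + r - i = q * d + r := by omega
        rw [this, hmod]
    · by_cases h2 : i + q * d + r + 1 < i + (D + d)
      · simp only [hf]
        rw [if_pos h2]
        have h1 : ¬ (i + q * d + r + 1 ≤ i) := by omega
        rw [if_neg h1]
        have he : i + q * d + r + 1 - i = q * d + (r + 1) := by omega
        rw [he]
        by_cases hr1 : r + 1 < d
        · rw [Nat.add_comm (q * d) (r + 1), Nat.add_mul_mod_self_right, Nat.mod_eq_of_lt hr1,
            ← Nat.add_assoc]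
        · have hrd : r + 1 = d := by omega
          rw [hrd]
          have : (q * d + d) % d = 0 := by
            rw [Nat.add_mod_right, Nat.mul_mod_left]
          rw [this]
          rw [Nat.add_zero]
          rw [hrep]
          congr 1
          omega
      · -- boundary: i + q*d + r + 1 = i + (D + d)
        have heq : q * d + r + 1 = D + d := by omega
        -- show r + 1 = d
        have hqB : q = B := by
          by_contra hqB
          have hq' : q + 1 ≤ B := by omega
          have : (q + 1) * d ≤ B * d := Nat.mul_le_mul_right d hq'
          have h1 : q * d + d ≤ D := by
            have hx : (q + 1) * d = q * d + d := by ring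
            omega
          omega
        have hrd : r + 1 = d := by
          subst hqB
          omega
        simp only [hf]
        rw [if_neg h2]
        have : i + q * d + r + 1 - D = i + d := by
          subst hqB; omega
        rw [this]
        congr 1
        omega
  refine ⟨L, fun k => v (f k), ?_, ?_, ?_, ?_, ?_⟩
  · -- u 0 = v 0
    simp only [hf]
    have h0 : (0:ℕ) < i + (D + d) := by omega
    rw [if_pos h0, if_pos (Nat.zero_le i)]
  · -- u L = v m
    simp only [hf]
    rw [if_neg (by omega)]
    congr 1
    omega
  · -- edges
    intro k hk
    simp only
    by_cases h1 : k + 1 ≤ i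
    · have hfk : f k = k := by
        simp only [hf]; rw [if_pos (by omega), if_pos (by omega)]
      have hfk1 : f (k + 1) = k + 1 := by
        simp only [hf]; rw [if_pos (by omega), if_pos h1]
      rw [hfk, hfk1]
      exact hpath k (by omega)
    · by_cases h2 : k < i + (D + d)
      · have hik : i ≤ k := by omega
        set e := k - i with he
        set q := e / d with hq
        set r := e % d with hr
        have hdm : d * (e / d) + e % d = e := Nat.div_add_mod e d
        have hke : k = i + q * d + r := by
          have hcm : q * d = d * (e / d) := by rw [hq]; ring
          omega
        have hrd : r < d := Nat.mod_lt e hd0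
        have hqB : q ≤ B := by
          by_contra hqB
          have : (B + 1) * d ≤ q * d := Nat.mul_le_mul_right d (by omega)
          have hx : (B + 1) * d = D + d := by rw [hD]; ring
          omega
        obtain ⟨ha, hb⟩ := keyA q r hqB hrd
        rw [hke, ha, hb]
        exact hpath (i + r) (by omega)
      · have hfk : f k = k - D := by
          simp only [hf]; rw [if_neg h2]
        have hfk1 : f (k + 1) = k + 1 - D := by
          simp only [hf]; rw [if_neg (by omega)]
        rw [hfk, hfk1]
        have : k + 1 - D = (k - D) + 1 := by omega
        rw [this]
        exact hpath (k - D) (by omega)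
  · -- visiting
    intro k hk
    simp only [hf]
    by_cases h2 : k < i + (D + d)
    · rw [if_pos h2]
      by_cases h1 : k ≤ i
      · exact ⟨k, by omega, by rw [if_pos h1]⟩
      · refine ⟨i + (k - i) % d, ?_, by rw [if_neg h1]⟩
        have := Nat.mod_lt (k - i) hd0
        omega
    · rw [if_neg h2]
      exact ⟨k - D, by omega, rfl⟩
  · -- cost
    show B < ∑ k ∈ Finset.range L, cst (v (f k)) (v (f (k + 1)))
    have block : ∀ q ≤ B + 1,
        ∑ k ∈ Finset.range (q * d), cst (v (f (i + k))) (v (f (i + k + 1))) = q * c := by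
      intro q hq
      induction q with
      | zero => simp
      | succ p ih =>
        have hp : p ≤ B + 1 := by omega
        have hsd : (p + 1) * d = p * d + d := by ring
        rw [hsd, Finset.sum_range_add, ih hp]
        have hinner : ∑ k ∈ Finset.range d,
            cst (v (f (i + (p * d + k)))) (v (f (i + (p * d + k) + 1))) = c := by
          have hcr : c = ∑ r ∈ Finset.range d, cst (v (i + r)) (v (i + r + 1)) := by
            rw [hc, Finset.sum_Ico_eq_sum_range, ← hd]
          rw [hcr]
          apply Finset.sum_congr rfl
          intro r hr
          rw [Finset.mem_range] at hr
          obtain ⟨ha, hb⟩ := keyA p r (by omega) hr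
          rw [← Nat.add_assoc i (p * d) r, ha, hb]
        rw [hinner]
        ring
    have hsub : ∑ k ∈ Finset.Ico i (i + (D + d)), cst (v (f k)) (v (f (k + 1)))
        ≤ ∑ k ∈ Finset.range L, cst (v (f k)) (v (f (k + 1))) := by
      apply Finset.sum_le_sum_of_subset
      intro x hx
      rw [Finset.mem_Ico] at hx
      rw [Finset.mem_range]
      omega
    have hIco : ∑ k ∈ Finset.Ico i (i + (D + d)), cst (v (f k)) (v (f (k + 1)))
        = (B + 1) * c := by
      rw [Finset.sum_Ico_eq_sum_range]
      have h1 : i + (D + d) - i = (B + 1) * d := by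
        have hx : (B + 1) * d = B * d + d := by ring
        omega
      rw [h1]
      exact block (B + 1) le_rfl
    have hBc : B + 1 ≤ (B + 1) * c := Nat.le_mul_of_pos_right _ hcyc
    omega
end
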